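/- arXiv:1606.03429 — 5 statements merged into one kernel-verified Lean document; each statement's English description precedes it below -/
import Mathlib

section
/- Let R be a graded ring supported in non-negative degrees, M a graded R-module with M_n = 0 for n sufficiently small, N a submodule of M (not necessarily homogeneous), and {x_i} a collection of elements of N. If the x_i form a Gröbner basis for N (i.e., the initial terms in(x_i) generate the initial submodule in(N)), then every element of N admits a reduced expression y = Σ a_i x_i with deg(a_i) + deg(x_i) ≤ deg(y) for all i. -/
open DirectSum

section Defs

variable {A : Type*} [CommRing A] (𝒜 : ℤ → AddSubgroup A) [GradedRing 𝒜]
variable {M : Type*} [AddCommGroup M] [Module A M] (ℳ : ℤ → AddSubgroup M)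
  [DirectSum.Decomposition ℳ]

/-- The degree of an element of a graded object: the largest `n` whose homogeneous
component is nonzero (junk value for `x = 0`). -/
noncomputable def mdeg {σ M : Type*} [AddCommMonoid M] [SetLike σ M] [AddSubmonoidClass σ M]
    (ℳ : ℤ → σ) [DirectSum.Decomposition ℳ] (x : M) : ℤ :=
  sSup {n : ℤ | (DirectSum.decompose ℳ x n : M) ≠ 0}

/-- The initial (top-degree) term of an element. -/
noncomputable def ini {σ M : Type*} [AddCommMonoid M] [SetLike σ M] [AddSubmonoidClass σ M]
    (ℳ : ℤ → σ) [DirectSum.Decomposition ℳ] (x : M) : M :=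
  (DirectSum.decompose ℳ x (mdeg ℳ x) : M)

/-- The initial submodule of a submodule `N`: generated by initial terms of nonzero
elements of `N`. -/
def iniSub (N : Submodule A M) : Submodule A M :=
  Submodule.span A {m : M | ∃ x ∈ N, x ≠ 0 ∧ ini ℳ x = m}

/-- The ring grading is supported in non-negative degrees. -/
def RingNonnegGraded : Prop := ∀ n < (0 : ℤ), ∀ a ∈ 𝒜 n, a = (0 : A)

/-- The module grading is bounded below. -/
def ModuleBddBelow : Prop := ∃ n₀ : ℤ, ∀ n < n₀, ∀ m ∈ ℳ n, m = (0 : M)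

/-- A family of elements of `N` is a Gröbner basis for `N`. -/
def IsGrobnerBasis {I : Type*} (N : Submodule A M) (x : I → M) : Prop :=
  (∀ i, x i ∈ N) ∧
    Submodule.span A (Set.range fun i => ini ℳ (x i)) = iniSub ℳ N

/-- `a` gives a reduced expression `y = ∑ aᵢ xᵢ` with `deg aᵢ + deg xᵢ ≤ deg y`. -/
def IsReducedExpr {I : Type*} (x : I → M) (y : M) (a : I →₀ A) : Prop :=
  y = a.sum (fun i c => c • x i) ∧
    ∀ i ∈ a.support, mdeg 𝒜 (a i) + mdeg ℳ (x i) ≤ mdeg ℳ y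

/-- Set version of a Gröbner basis. -/
def IsGrobnerBasisSet (N : Submodule A M) (s : Set M) : Prop :=
  s ⊆ (N : Set M) ∧ Submodule.span A (ini ℳ '' s) = iniSub ℳ N

/-- `y` has a reduced expression in terms of the elements of `s`. -/
def HasReducedExprSet (s : Set M) (y : M) : Prop :=
  ∃ a : M →₀ A, ↑a.support ⊆ s ∧ y = a.sum (fun m c => c • m) ∧
    ∀ m ∈ a.support, mdeg 𝒜 (a m) + mdeg ℳ m ≤ mdeg ℳ y

/-- A submodule is homogeneous when it contains all homogeneous components of its
elements. -/
def IsHomogSubmodule (N : Submodule A M) : Prop :=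
  ∀ x ∈ N, ∀ n : ℤ, (DirectSum.decompose ℳ x n : M) ∈ N

/-- Graded-coherent: finitely generated, and every finitely generated homogeneous
submodule is finitely presented. -/
def GradedCoherent : Prop :=
  Module.Finite A M ∧ ∀ N : Submodule A M, N.FG → IsHomogSubmodule ℳ N →
    Module.FinitePresentation A N

/-- Gröbner-coherent: graded-coherent, and every finitely generated (possibly
inhomogeneous) submodule admits a finite Gröbner basis. -/
def GrobnerCoherent : Prop :=
  GradedCoherent (A := A) ℳ ∧ ∀ N : Submodule A M, N.FG →
    ∃ s : Finset M, IsGrobnerBasisSet ℳ N ↑s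

/-- A homogeneous generating family of syzygies of the initial terms of the `x i`
(with the free module graded by `deg eᵢ = deg xᵢ`). -/
def IsHomogSyzygyGens {I J : Type*} (x : I → M) (c : J → I →₀ A) : Prop :=
  (∀ j, ∃ d : ℤ, ∀ i, c j i ∈ 𝒜 (d - mdeg ℳ (x i))) ∧
    Submodule.span A (Set.range c) =
      LinearMap.ker (Finsupp.linearCombination A fun i => ini ℳ (x i))

/-- Set version of a homogeneous generating set of syzygies of initial terms. -/
def IsHomogSyzygyGensSet (X : Set M) (C : Set (M →₀ A)) : Prop :=
  (∀ c ∈ C, ↑c.support ⊆ X) ∧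
  (∀ c ∈ C, ∃ d : ℤ, ∀ m : M, c m ∈ 𝒜 (d - mdeg ℳ m)) ∧
  Submodule.span A C =
    Finsupp.supported A A X ⊓
      LinearMap.ker (Finsupp.linearCombination A fun m : M => ini ℳ m)

/-- The elements `z = ∑ c m • m` attached to a set of syzygies `C`. -/
def zElems (C : Set (M →₀ A)) : Set M :=
  (fun c : M →₀ A => c.sum fun m coeff => coeff • m) '' C

/-- One step of Buchberger's algorithm: adjoin the `z`-elements of a homogeneous
generating set of syzygies. -/
def BuchbergerStep (X Y : Set M) : Prop :=
  ∃ C : Set (M →₀ A), IsHomogSyzygyGensSet 𝒜 ℳ X C ∧ Y = X ∪ zElems C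

end Defs

section GrobnerHelpers

variable {M' : Type*} [AddCommGroup M'] (ℳ' : ℤ → AddSubgroup M') [DirectSum.Decomposition ℳ']

lemma degSet_finite (z : M') : {n : ℤ | (DirectSum.decompose ℳ' z n : M') ≠ 0}.Finite := by
  classical
  apply Set.Finite.subset (DirectSum.decompose ℳ' z).support.finite_toSet
  intro n hn
  rw [Finset.mem_coe, DFinsupp.mem_support_iff]
  intro h
  exact hn (by rw [h]; rfl)

lemma degSet_nonempty {z : M'} (hz : z ≠ 0) :
    {n : ℤ | (DirectSum.decompose ℳ' z n : M') ≠ 0}.Nonempty := by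
  classical
  by_contra h
  rw [Set.not_nonempty_iff_eq_empty] at h
  apply hz
  rw [← DirectSum.sum_support_decompose ℳ' z]
  apply Finset.sum_eq_zero
  intro n hn
  by_contra hc
  have : n ∈ {n : ℤ | (DirectSum.decompose ℳ' z n : M') ≠ 0} := hc
  rw [h] at this
  exact this

lemma ini_ne_zero {z : M'} (hz : z ≠ 0) : ini ℳ' z ≠ 0 :=
  Set.Nonempty.csSup_mem (degSet_nonempty ℳ' hz) (degSet_finite ℳ' z)

lemma decompose_eq_zero_of_mdeg_lt (z : M') {n : ℤ} (h : mdeg ℳ' z < n) :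
    (DirectSum.decompose ℳ' z n : M') = 0 := by
  by_cases hz : z = 0
  · simp [hz]
  · by_contra hc
    have hn : n ∈ {n : ℤ | (DirectSum.decompose ℳ' z n : M') ≠ 0} := hc
    have := le_csSup (degSet_finite ℳ' z).bddAbove hn
    exact absurd this (not_le.mpr h)

lemma mdeg_le {z : M'} (hz : z ≠ 0) {t : ℤ}
    (h : ∀ n, t < n → (DirectSum.decompose ℳ' z n : M') = 0) : mdeg ℳ' z ≤ t := by
  apply csSup_le (degSet_nonempty ℳ' hz)
  intro n hn
  by_contra hc
  exact hn (h n (not_le.mp hc))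

lemma mdeg_of_mem {z : M'} {d : ℤ} (hz : z ≠ 0) (h : z ∈ ℳ' d) : mdeg ℳ' z = d := by
  have h1 : mdeg ℳ' z ≤ d := by
    apply mdeg_le ℳ' hz
    intro n hn
    exact DirectSum.decompose_of_mem_ne ℳ' h (by omega)
  have h2 : d ≤ mdeg ℳ' z := by
    apply le_csSup (degSet_finite ℳ' z).bddAbove
    show (DirectSum.decompose ℳ' z d : M') ≠ 0
    rw [DirectSum.decompose_of_mem_same ℳ' h]
    exact hz
  omega

lemma decompose_finset_sum {I : Type*} (s : Finset I) (g : I → M') (n : ℤ) :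
    (DirectSum.decompose ℳ' (∑ i ∈ s, g i) n : M') =
      ∑ i ∈ s, (DirectSum.decompose ℳ' (g i) n : M') := by
  classical
  induction s using Finset.induction_on with
  | empty => simp
  | insert _ _ hni ih =>
    rw [Finset.sum_insert hni, Finset.sum_insert hni, DirectSum.decompose_add,
      DirectSum.add_apply, AddSubgroup.coe_add, ih]

end GrobnerHelpers

section GrobnerSmul

variable {A : Type*} [CommRing A] (𝒜 : ℤ → AddSubgroup A) [GradedRing 𝒜]
variable {M : Type*} [AddCommGroup M] [Module A M] (ℳ : ℤ → AddSubgroup M)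
  [DirectSum.Decomposition ℳ] [SetLike.GradedSMul 𝒜 ℳ]

omit [GradedRing 𝒜] in
lemma decompose_smul_homog {a : A} {d : ℤ} (ha : a ∈ 𝒜 d) (m : M) (n : ℤ) :
    (DirectSum.decompose ℳ (a • m) n : M) = a • (DirectSum.decompose ℳ m (n - d) : M) := by
  induction m using DirectSum.Decomposition.inductionOn ℳ with
  | zero => simp
  | homogeneous mi =>
    obtain ⟨m, hm⟩ := mi
    rename_i i
    have hsm : a • m ∈ ℳ (d + i) := SetLike.GradedSMul.smul_mem ha hm
    by_cases hn : n = d + i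
    · subst hn
      rw [DirectSum.decompose_of_mem_same ℳ hsm]
      rw [show d + i - d = i by ring, DirectSum.decompose_of_mem_same ℳ hm]
    · rw [DirectSum.decompose_of_mem_ne ℳ hsm (Ne.symm hn),
        DirectSum.decompose_of_mem_ne ℳ hm (show i ≠ n - d by omega), smul_zero]
  | add m m' hm hm' =>
    rw [smul_add, DirectSum.decompose_add, DirectSum.decompose_add, DirectSum.add_apply,
      DirectSum.add_apply, AddSubgroup.coe_add, AddSubgroup.coe_add, hm, hm', smul_add]

lemma decompose_smul_homog' {z : M} {j : ℤ} (hz : z ∈ ℳ j) (c : A) (n : ℤ) :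
    (DirectSum.decompose ℳ (c • z) n : M) = (DirectSum.decompose 𝒜 c (n - j) : A) • z := by
  induction c using DirectSum.Decomposition.inductionOn 𝒜 with
  | zero => simp
  | homogeneous ci =>
    obtain ⟨c, hc⟩ := ci
    rename_i d
    have hsm : c • z ∈ ℳ (d + j) := SetLike.GradedSMul.smul_mem hc hz
    by_cases hn : n = d + j
    · subst hn
      rw [DirectSum.decompose_of_mem_same ℳ hsm]
      rw [show d + j - j = d by ring, DirectSum.decompose_of_mem_same 𝒜 hc]
    · rw [DirectSum.decompose_of_mem_ne ℳ hsm (Ne.symm hn),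
        DirectSum.decompose_of_mem_ne 𝒜 hc (show d ≠ n - j by omega), zero_smul]
  | add c c' hc hc' =>
    rw [add_smul, DirectSum.decompose_add, DirectSum.decompose_add, DirectSum.add_apply,
      DirectSum.add_apply, AddSubgroup.coe_add, AddSubgroup.coe_add, hc, hc', add_smul]

end GrobnerSmul


/-- If `{xᵢ}` is a Gröbner basis for `N`, then every element of `N` admits a reduced
expression in terms of the `xᵢ`. -/
theorem stmt_0 {A M : Type*} [CommRing A] (𝒜 : ℤ → AddSubgroup A) [GradedRing 𝒜]
    [AddCommGroup M] [Module A M] (ℳ : ℤ → AddSubgroup M) [DirectSum.Decomposition ℳ]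
    [SetLike.GradedSMul 𝒜 ℳ]
    (hA : RingNonnegGraded 𝒜) (hM : ModuleBddBelow ℳ)
    {I : Type*} (N : Submodule A M) (x : I → M)
    (hGB : IsGrobnerBasis ℳ N x) :
    ∀ y ∈ N, ∃ a : I →₀ A, IsReducedExpr 𝒜 ℳ x y a := by
  classical
  obtain ⟨n₀, hn₀⟩ := hM
  -- the zero element has the trivial reduced expression
  have zero_expr : ∃ a : I →₀ A, IsReducedExpr 𝒜 ℳ x 0 a := by
    refine ⟨0, ?_, ?_⟩
    · simp [Finsupp.sum_zero_index]
    · simp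
  -- a nonzero element of small degree is zero
  have small_zero : ∀ y : M, y ≠ 0 → n₀ ≤ mdeg ℳ y := by
    intro y hy
    by_contra h
    exact ini_ne_zero ℳ hy (hn₀ _ (not_le.mp h) _ (SetLike.coe_mem _))
  -- one reduction step
  have step : ∀ y ∈ N, y ≠ 0 → ∃ b : I →₀ A,
      (∀ i, (b i : A) ∈ 𝒜 (mdeg ℳ y - mdeg ℳ (x i))) ∧
      (∀ n, mdeg ℳ y ≤ n →
        (DirectSum.decompose ℳ (y - b.sum fun i r => r • x i) n : M) = 0) := by
    intro y hy hy0
    have hiy : ini ℳ y ∈ iniSub ℳ N := Submodule.subset_span ⟨y, hy, hy0, rfl⟩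
    rw [← hGB.2] at hiy
    obtain ⟨c, hc⟩ := (Finsupp.mem_span_range_iff_exists_finsupp).mp hiy
    set D : I → ℤ := fun i => mdeg ℳ y - mdeg ℳ (x i) with hD
    refine ⟨Finsupp.onFinset c.support
      (fun i => (DirectSum.decompose 𝒜 (c i) (D i) : A)) ?_, ?_, ?_⟩
    · intro i h
      rw [Finsupp.mem_support_iff]
      intro hci
      exact h (show (DirectSum.decompose 𝒜 (c i) (D i) : A) = 0 by rw [hci]; simp)
    · intro i
      exact SetLike.coe_mem _
    · set b : I →₀ A := Finsupp.onFinset c.support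
        (fun i => (DirectSum.decompose 𝒜 (c i) (D i) : A)) (by
          intro i h
          rw [Finsupp.mem_support_iff]
          intro hci
          exact h (show (DirectSum.decompose 𝒜 (c i) (D i) : A) = 0 by rw [hci]; simp)) with hb
      have hbval : ∀ i, b i = (DirectSum.decompose 𝒜 (c i) (D i) : A) := fun i => rfl
      have hbsum : (b.sum fun i r => r • x i) = ∑ i ∈ c.support, b i • x i := by
        apply Finsupp.sum_of_support_subset b (Finsupp.support_onFinset_subset)
        intro i _
        exact zero_smul A (x i)
      -- the key identity: ini y = ∑ b i • ini (x i)
      have hkey : ∑ i ∈ c.support, b i • ini ℳ (x i) = ini ℳ y := by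
        have hthis := congrArg (fun z => (DirectSum.decompose ℳ z (mdeg ℳ y) : M)) hc
        simp only at hthis
        have hsame : (DirectSum.decompose ℳ (ini ℳ y) (mdeg ℳ y) : M) = ini ℳ y :=
          DirectSum.decompose_of_mem_same ℳ (SetLike.coe_mem _)
        rw [Finsupp.sum, decompose_finset_sum, hsame] at hthis
        rw [← hthis]
        apply Finset.sum_congr rfl
        intro i _
        have hxmem : ini ℳ (x i) ∈ ℳ (mdeg ℳ (x i)) := SetLike.coe_mem _
        rw [decompose_smul_homog' 𝒜 ℳ hxmem, hbval]
      intro n hn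
      rw [hbsum, DirectSum.decompose_sub, DirectSum.sub_apply, AddSubgroup.coe_sub,
        decompose_finset_sum, sub_eq_zero]
      have hDi : ∀ i, D i = mdeg ℳ y - mdeg ℳ (x i) := fun i => rfl
      rcases eq_or_lt_of_le hn with heq | hlt
      · rw [← heq]
        show ini ℳ y = _
        rw [← hkey]
        apply Finset.sum_congr rfl
        intro i _
        rw [hbval i, decompose_smul_homog 𝒜 ℳ (SetLike.coe_mem _) (x i) (mdeg ℳ y)]
        have harg : mdeg ℳ y - D i = mdeg ℳ (x i) := by rw [hDi]; ring
        rw [harg]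
        rfl
      · rw [decompose_eq_zero_of_mdeg_lt ℳ y hlt]
        symm
        apply Finset.sum_eq_zero
        intro i _
        rw [hbval i, decompose_smul_homog 𝒜 ℳ (SetLike.coe_mem _) (x i) n,
          decompose_eq_zero_of_mdeg_lt ℳ (x i) (by rw [hDi]; omega), smul_zero]
  -- main induction on a bound for the degree
  have key : ∀ k : ℕ, ∀ y ∈ N, mdeg ℳ y < n₀ + k → ∃ a : I →₀ A, IsReducedExpr 𝒜 ℳ x y a := by
    intro k
    induction k with
    | zero =>
      intro y hy hlt
      by_cases hy0 : y = 0
      · subst hy0; exact zero_expr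
      · exact absurd (small_zero y hy0) (by push_cast at hlt; omega)
    | succ k ih =>
      intro y hy hlt
      by_cases hy0 : y = 0
      · subst hy0; exact zero_expr
      obtain ⟨b, hbmem, hbcomp⟩ := step y hy hy0
      set y' : M := y - b.sum fun i r => r • x i with hy'def
      have hsumN : (b.sum fun i r => r • x i) ∈ N := by
        apply Submodule.sum_mem
        intro i _
        exact N.smul_mem _ (hGB.1 i)
      have hy'N : y' ∈ N := N.sub_mem hy hsumN
      by_cases hy'0 : y' = 0
      · refine ⟨b, ?_, ?_⟩
        · rw [← sub_eq_zero]; exact hy'0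
        · intro i hi
          have hbne : b i ≠ 0 := Finsupp.mem_support_iff.mp hi
          rw [mdeg_of_mem 𝒜 hbne (hbmem i)]
          omega
      · have hdlt : mdeg ℳ y' ≤ mdeg ℳ y - 1 := by
          apply mdeg_le ℳ hy'0
          intro n hn
          exact hbcomp n (by omega)
        obtain ⟨a', ha'1, ha'2⟩ := ih y' hy'N (by push_cast at hlt ⊢; omega)
        refine ⟨a' + b, ?_, ?_⟩
        · rw [Finsupp.sum_add_index' (fun i => zero_smul A (x i))
            (fun i r r' => add_smul r r' (x i)), ← ha'1]
          rw [hy'def]; abel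
        · intro i hi
          have hane : (a' + b) i ≠ 0 := Finsupp.mem_support_iff.mp hi
          by_cases ha'i : a' i = 0
          · have heq : (a' + b) i = b i := by rw [Finsupp.add_apply, ha'i, zero_add]
            have hbne : b i ≠ 0 := by rw [← heq]; exact hane
            rw [heq, mdeg_of_mem 𝒜 hbne (hbmem i)]
            omega
          · have h1 := ha'2 i (Finsupp.mem_support_iff.mpr ha'i)
            have hmax : mdeg 𝒜 ((a' + b) i) ≤
                max (mdeg 𝒜 (a' i)) (mdeg ℳ y - mdeg ℳ (x i)) := by
              apply mdeg_le 𝒜 hane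
              intro n hn
              rw [Finsupp.add_apply, DirectSum.decompose_add, DirectSum.add_apply,
                AddSubgroup.coe_add,
                decompose_eq_zero_of_mdeg_lt 𝒜 (a' i) (lt_of_le_of_lt (le_max_left _ _) hn),
                DirectSum.decompose_of_mem_ne 𝒜 (hbmem i)
                  (by have := lt_of_le_of_lt (le_max_right _ _) hn; omega),
                add_zero]
            rcases max_cases (mdeg 𝒜 (a' i)) (mdeg ℳ y - mdeg ℳ (x i)) with ⟨hm, _⟩ | ⟨hm, _⟩ <;>
              rw [hm] at hmax <;> omega
  intro y hy
  refine key (mdeg ℳ y - n₀ + 1).toNat y hy ?_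
  have := Int.self_le_toNat (mdeg ℳ y - n₀ + 1)
  omega
end

section
/- Let R be a graded ring in non-negative degrees, M a graded module bounded below, N a submodule generated by elements {x_i}_{i∈I}. Suppose there exists δ ≥ 0 such that every y ∈ N admits an expression y = Σ a_i x_i with deg(a_i) + deg(x_i) ≤ deg(y) + δ for all i. Then Buchberger's algorithm applied to {x_i} (repeatedly adjoining the elements z_j built from homogeneous generating syzygies of the initial terms) terminates after at most δ steps with a Gröbner basis of N. -/
open DirectSum

namespace Aux

variable {σ M : Type*} [AddCommMonoid M] [SetLike σ M] [AddSubmonoidClass σ M]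
  (ℳ : ℤ → σ) [DirectSum.Decomposition ℳ]

lemma coe_sum {ι : Type*} (s : Finset ι) (f : ι → M) (n : ℤ) :
    (DirectSum.decompose ℳ (∑ i ∈ s, f i) n : M)
      = ∑ i ∈ s, (DirectSum.decompose ℳ (f i) n : M) := by
  rw [DirectSum.decompose_sum, DFinsupp.finset_sum_apply, AddSubmonoidClass.coe_finset_sum]

lemma coe_add (x y : M) (n : ℤ) :
    (DirectSum.decompose ℳ (x + y) n : M)
      = (DirectSum.decompose ℳ x n : M) + (DirectSum.decompose ℳ y n : M) := by
  rw [DirectSum.decompose_add, DirectSum.add_apply, AddMemClass.coe_add]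

variable {ℳ}

lemma dsupport_finite (x : M) : {n : ℤ | (DirectSum.decompose ℳ x n : M) ≠ 0}.Finite := by
  classical
  apply Set.Finite.subset (DFinsupp.support (DirectSum.decompose ℳ x)).finite_toSet
  intro n hn
  simp only [Set.mem_setOf_eq] at hn
  simp only [Finset.coe_sort_coe, Finset.mem_coe, DFinsupp.mem_support_iff]
  exact fun h => hn (by rw [h]; rfl)

lemma dsupport_nonempty {x : M} (hx : x ≠ 0) :
    {n : ℤ | (DirectSum.decompose ℳ x n : M) ≠ 0}.Nonempty := by
  classical
  by_contra h
  rw [Set.not_nonempty_iff_eq_empty, Set.eq_empty_iff_forall_notMem] at h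
  apply hx
  rw [← DirectSum.sum_support_decompose ℳ x]
  refine Finset.sum_eq_zero fun i _ => ?_
  have := h i
  simpa [Set.mem_setOf_eq] using this

lemma le_mdeg {x : M} {n : ℤ} (h : (DirectSum.decompose ℳ x n : M) ≠ 0) : n ≤ mdeg ℳ x :=
  le_csSup (dsupport_finite x).bddAbove h

lemma mdeg_component_ne {x : M} (hx : x ≠ 0) :
    (DirectSum.decompose ℳ x (mdeg ℳ x) : M) ≠ 0 :=
  Int.csSup_mem (dsupport_nonempty hx) (dsupport_finite x).bddAbove

lemma decompose_eq_zero_of_lt {x : M} {n : ℤ} (h : mdeg ℳ x < n) :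
    (DirectSum.decompose ℳ x n : M) = 0 := by
  by_contra h'
  exact absurd (le_mdeg h') (not_le.2 h)

lemma mdeg_le {x : M} {n : ℤ} (hx : x ≠ 0)
    (h : ∀ p, (DirectSum.decompose ℳ x p : M) ≠ 0 → p ≤ n) : mdeg ℳ x ≤ n :=
  csSup_le (dsupport_nonempty hx) h

lemma ini_ne_zero {x : M} (hx : x ≠ 0) : ini ℳ x ≠ 0 := mdeg_component_ne hx

lemma ini_zero : ini ℳ (0 : M) = 0 := by
  simp [ini]

end Aux

namespace Aux

variable {A : Type*} [CommRing A] {𝒜 : ℤ → AddSubgroup A} [GradedRing 𝒜]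
variable {M : Type*} [AddCommGroup M] [Module A M] {ℳ : ℤ → AddSubgroup M}
  [DirectSum.Decomposition ℳ] [SetLike.GradedSMul 𝒜 ℳ]

lemma decompose_smul_of_mem {a : A} {p : ℤ} (ha : a ∈ 𝒜 p) (m : M) (n : ℤ) :
    (DirectSum.decompose ℳ (a • m) n : M) = a • (DirectSum.decompose ℳ m (n - p) : M) := by
  classical
  conv_lhs => rw [← DirectSum.sum_support_decompose ℳ m]
  rw [Finset.smul_sum, coe_sum]
  rw [Finset.sum_eq_single (n - p) (fun q hq hne => ?_) (fun h => ?_)]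
  · have hmem := SetLike.GradedSMul.smul_mem (A := 𝒜) (B := ℳ) ha
      (SetLike.coe_mem (DirectSum.decompose ℳ m (n - p)))
    rw [vadd_eq_add] at hmem
    have : p + (n - p) = n := by ring
    rw [this] at hmem
    exact DirectSum.decompose_of_mem_same ℳ hmem
  · have hmem := SetLike.GradedSMul.smul_mem (A := 𝒜) (B := ℳ) ha
      (SetLike.coe_mem (DirectSum.decompose ℳ m q))
    rw [vadd_eq_add] at hmem
    exact DirectSum.decompose_of_mem_ne ℳ hmem (by omega)
  · rw [DFinsupp.notMem_support_iff] at h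
    rw [h]
    simp

lemma decompose_mul_right_of_mem {b : A} {q : ℤ} (hb : b ∈ 𝒜 q) (r : A) (n : ℤ) :
    (DirectSum.decompose 𝒜 (r * b) n : A) = (DirectSum.decompose 𝒜 r (n - q) : A) * b := by
  rw [mul_comm, mul_comm _ b]
  exact decompose_smul_of_mem (ℳ := 𝒜) hb r n

open scoped Classical in
lemma decompose_smul_eq_sum (a : A) (m : M) (n : ℤ) :
    (DirectSum.decompose ℳ (a • m) n : M) =
      ∑ p ∈ (DirectSum.decompose 𝒜 a).support,
        (DirectSum.decompose 𝒜 a p : A) • (DirectSum.decompose ℳ m (n - p) : M) := by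
  classical
  conv_lhs => rw [← DirectSum.sum_support_decompose 𝒜 a]
  rw [Finset.sum_smul, coe_sum]
  exact Finset.sum_congr rfl fun p _ => decompose_smul_of_mem (SetLike.coe_mem _) m n

open scoped Classical in
lemma decompose_smul_top (a : A) {m : M} {D : ℤ} (hm : m ≠ 0)
    (h : a ≠ 0 → mdeg 𝒜 a + mdeg ℳ m ≤ D) :
    (DirectSum.decompose ℳ (a • m) D : M)
      = (DirectSum.decompose 𝒜 a (D - mdeg ℳ m) : A) • ini ℳ m := by
  classical
  rcases eq_or_ne a 0 with rfl | ha
  · rw [show (0 : A) • m = 0 from zero_smul A m,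
      show (DirectSum.decompose 𝒜 (0 : A) (D - mdeg ℳ m) : A) = 0 by simp,
      zero_smul, DirectSum.decompose_zero]
    rfl
  rw [decompose_smul_eq_sum (𝒜 := 𝒜)]
  rw [Finset.sum_eq_single (D - mdeg ℳ m) (fun p hp hne => ?_) (fun h' => ?_)]
  · rw [ini, sub_sub_cancel]
  · have hple : p ≤ mdeg 𝒜 a := by
      refine le_mdeg ?_
      rw [DFinsupp.mem_support_iff] at hp
      exact fun h0 => hp (by ext; simpa using h0)
    have hlt : mdeg ℳ m < D - p := by
      have := h ha
      omega
    rw [decompose_eq_zero_of_lt hlt, smul_zero]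
  · rw [DFinsupp.notMem_support_iff] at h'
    rw [show ((DirectSum.decompose 𝒜 a (D - mdeg ℳ m) : A)) = 0 by rw [h']; rfl, zero_smul]

lemma decompose_finsupp_sum (a : M →₀ A) (n : ℤ) :
    (DirectSum.decompose ℳ (a.sum fun m c => c • m) n : M)
      = ∑ m ∈ a.support, (DirectSum.decompose ℳ (a m • m) n : M) := by
  rw [Finsupp.sum, coe_sum]

lemma top_component_expr (a : M →₀ A) (D : ℤ)
    (hdef : ∀ m ∈ a.support, m ≠ 0 → mdeg 𝒜 (a m) + mdeg ℳ m ≤ D) :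
    (DirectSum.decompose ℳ (a.sum fun m c => c • m) D : M)
      = ∑ m ∈ a.support, (DirectSum.decompose 𝒜 (a m) (D - mdeg ℳ m) : A) • ini ℳ m := by
  rw [decompose_finsupp_sum]
  refine Finset.sum_congr rfl fun m hm => ?_
  rcases eq_or_ne m 0 with rfl | hm0
  · simp [ini_zero]
  · exact decompose_smul_top _ hm0 fun _ => hdef m hm hm0

lemma z_component_eq_zero {c : M →₀ A} {d : ℤ} (hc : ∀ m, c m ∈ 𝒜 (d - mdeg ℳ m))
    (hker : (c.sum fun m r => r • ini ℳ m) = 0) {n : ℤ} (hn : d ≤ n) :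
    (DirectSum.decompose ℳ (c.sum fun m r => r • m) n : M) = 0 := by
  classical
  rw [decompose_finsupp_sum]
  rcases eq_or_ne n d with rfl | hne
  · rw [← hker, Finsupp.sum]
    refine Finset.sum_congr rfl fun m hm => ?_
    rw [decompose_smul_of_mem (hc m), show n - (n - mdeg ℳ m) = mdeg ℳ m by ring]
    rfl
  · refine Finset.sum_eq_zero fun m hm => ?_
    rw [decompose_smul_of_mem (hc m)]
    rw [decompose_eq_zero_of_lt (by omega), smul_zero]

lemma mdeg_z_lt {c : M →₀ A} {d : ℤ} (hc : ∀ m, c m ∈ 𝒜 (d - mdeg ℳ m))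
    (hker : (c.sum fun m r => r • ini ℳ m) = 0)
    (hz : (c.sum fun m r => r • m) ≠ 0) : mdeg ℳ (c.sum fun m r => r • m) ≤ d - 1 := by
  refine mdeg_le hz fun p hp => ?_
  by_contra h
  exact hp (z_component_eq_zero hc hker (by omega))

end Aux
set_option linter.unusedSectionVars false
set_option linter.unusedVariables false

namespace Aux

/-- `zOf t = ∑ t m • m`. -/
def zOf {A M : Type*} [CommRing A] [AddCommGroup M] [Module A M] (t : M →₀ A) : M :=
  t.sum fun m r => r • m

open scoped Classical in
/-- A choice of "syzygy degree" for a finsupp. -/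
noncomputable def sdeg {A M : Type*} [CommRing A] (𝒜 : ℤ → AddSubgroup A)
    [AddCommGroup M] [Module A M] (ℳ : ℤ → AddSubgroup M) [DirectSum.Decomposition ℳ]
    (t : M →₀ A) : ℤ :=
  if h : ∃ d : ℤ, ∀ m, t m ∈ 𝒜 (d - mdeg ℳ m) then h.choose else 0

variable {A : Type*} [CommRing A] {𝒜 : ℤ → AddSubgroup A} [GradedRing 𝒜]
variable {M : Type*} [AddCommGroup M] [Module A M] {ℳ : ℤ → AddSubgroup M}
  [DirectSum.Decomposition ℳ] [SetLike.GradedSMul 𝒜 ℳ]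

lemma sdeg_spec {t : M →₀ A} (h : ∃ d : ℤ, ∀ m, t m ∈ 𝒜 (d - mdeg ℳ m)) :
    ∀ m, t m ∈ 𝒜 (sdeg 𝒜 ℳ t - mdeg ℳ m) := by
  classical
  rw [sdeg]
  rw [dif_pos h]
  exact h.choose_spec

lemma coe_sub (x y : M) (n : ℤ) :
    (DirectSum.decompose ℳ (x - y) n : M)
      = (DirectSum.decompose ℳ x n : M) - (DirectSum.decompose ℳ y n : M) := by
  rw [DirectSum.decompose_sub, DirectSum.sub_apply, AddSubgroupClass.coe_sub]

lemma sum_smul_eq_lc (b : M →₀ A) :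
    (b.sum fun m r => r • m) = Finsupp.linearCombination A (id : M → M) b := by
  rw [Finsupp.linearCombination_apply]
  rfl

open scoped Classical in
lemma reduction_step {X : Set M} {C : Set (M →₀ A)} (hC : IsHomogSyzygyGensSet 𝒜 ℳ X C)
    {y : M} {D : ℤ} (hD : mdeg ℳ y < D)
    (a : M →₀ A) (hsupp : ↑a.support ⊆ X) (hexpr : y = a.sum fun m c => c • m)
    (hdef : ∀ m ∈ a.support, mdeg 𝒜 (a m) + mdeg ℳ m ≤ D) :
    ∃ a' : M →₀ A, ↑a'.support ⊆ X ∪ zElems C ∧ (y = a'.sum fun m c => c • m) ∧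
      ∀ m ∈ a'.support, mdeg 𝒜 (a' m) + mdeg ℳ m ≤ D - 1 := by
  classical
  obtain ⟨hCsupp, hChom, hCspan⟩ := hC
  -- the top-degree part of `a`, a syzygy of initial terms
  set c : M →₀ A := Finsupp.onFinset a.support
    (fun m => (DirectSum.decompose 𝒜 (a m) (D - mdeg ℳ m) : A))
    (fun m h => Finsupp.mem_support_iff.mpr (fun h0 => h (by simp [h0]))) with hcdef
  have hc_apply : ∀ m, c m = (DirectSum.decompose 𝒜 (a m) (D - mdeg ℳ m) : A) := fun m => rfl
  have hcmem : ∀ m, c m ∈ 𝒜 (D - mdeg ℳ m) := fun m => SetLike.coe_mem _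
  have hcsupp : c.support ⊆ a.support := Finsupp.support_onFinset_subset
  have hyD : (DirectSum.decompose ℳ y D : M) = 0 := decompose_eq_zero_of_lt hD
  have htop : ∑ m ∈ a.support,
      (DirectSum.decompose 𝒜 (a m) (D - mdeg ℳ m) : A) • ini ℳ m = 0 := by
    rw [← top_component_expr a D (fun m hm _ => hdef m hm), ← hexpr, hyD]
  have hcker : (c.sum fun m r => r • ini ℳ m) = 0 := by
    rw [Finsupp.sum_of_support_subset c hcsupp (fun m r => r • ini ℳ m) (fun m _ => zero_smul A _)]
    exact htop
  -- any element of `C` is a syzygy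
  have htker : ∀ t ∈ C, (t.sum fun m r => r • ini ℳ m) = 0 := by
    intro t ht
    have : t ∈ Finsupp.supported A A X ⊓
        LinearMap.ker (Finsupp.linearCombination A fun m : M => ini ℳ m) := by
      rw [← hCspan]
      exact Submodule.subset_span ht
    have := (Submodule.mem_inf.mp this).2
    rwa [LinearMap.mem_ker, Finsupp.linearCombination_apply] at this
  -- `c` lies in the span of `C`
  have hcspan : c ∈ Submodule.span A C := by
    rw [hCspan, Submodule.mem_inf]
    constructor
    · rw [Finsupp.mem_supported]
      exact subset_trans (Finset.coe_subset.mpr hcsupp) hsupp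
    · rw [LinearMap.mem_ker, Finsupp.linearCombination_apply]
      exact hcker
  obtain ⟨f, hf1, hf2⟩ := Submodule.mem_span_set.mp hcspan
  -- homogeneous degrees of elements of the support of `f`
  have hfC : ∀ t ∈ f.support, t ∈ C := fun t ht => hf1 ht
  have hdd : ∀ t ∈ f.support, ∀ m, t m ∈ 𝒜 (sdeg 𝒜 ℳ t - mdeg ℳ m) :=
    fun t ht => sdeg_spec (hChom t (hfC t ht))
  set g : (M →₀ A) → A := fun t => (DirectSum.decompose 𝒜 (f t) (D - sdeg 𝒜 ℳ t) : A)
    with hgdef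
  have hgmem : ∀ t, g t ∈ 𝒜 (D - sdeg 𝒜 ℳ t) := fun t => SetLike.coe_mem _
  -- coefficientwise identity
  have h1 : ∀ m, c m = ∑ t ∈ f.support, f t * t m := by
    intro m
    rw [← hf2, Finsupp.sum, Finset.sum_apply']
    exact Finset.sum_congr rfl fun t _ => by rw [Finsupp.smul_apply, smul_eq_mul]
  have hcoef : ∀ m, c m = ∑ t ∈ f.support, g t * t m := by
    intro m
    conv_lhs => rw [← DirectSum.decompose_of_mem_same 𝒜 (hcmem m), h1 m, coe_sum]
    refine Finset.sum_congr rfl fun t ht => ?_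
    rw [decompose_mul_right_of_mem (hdd t ht m),
      show D - mdeg ℳ m - (sdeg 𝒜 ℳ t - mdeg ℳ m) = D - sdeg 𝒜 ℳ t by ring]
  -- sum identity: the element of `c` equals the `g`-combination of the `z`'s
  set U : Finset M := a.support ∪ f.support.biUnion (fun t => t.support) with hUdef
  have hzsum : (c.sum fun m r => r • m) = ∑ t ∈ f.support, g t • zOf t := by
    rw [Finsupp.sum_of_support_subset c
      (subset_trans hcsupp Finset.subset_union_left) (fun m r => r • m)
      (fun m _ => zero_smul A _)]
    calc ∑ m ∈ U, c m • m = ∑ m ∈ U, ∑ t ∈ f.support, (g t * t m) • m := by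
          refine Finset.sum_congr rfl fun m _ => ?_
          rw [hcoef m, Finset.sum_smul]
      _ = ∑ t ∈ f.support, ∑ m ∈ U, (g t * t m) • m := Finset.sum_comm
      _ = ∑ t ∈ f.support, g t • zOf t := by
          refine Finset.sum_congr rfl fun t ht => ?_
          rw [zOf, Finsupp.sum_of_support_subset t
            (subset_trans (Finset.subset_biUnion_of_mem _ ht) Finset.subset_union_right)
            (fun m r => r • m) (fun m _ => zero_smul A _), Finset.smul_sum]
          exact Finset.sum_congr rfl fun m _ => by rw [smul_smul]
  -- the new expression
  set S : Finset (M →₀ A) := f.support.filter (fun t => zOf t ≠ 0) with hSdef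
  have hmz : ∀ t ∈ S, zOf t ∈ zElems C := by
    intro t ht
    exact ⟨t, hfC t (Finset.mem_of_mem_filter t ht), rfl⟩
  have hz_deg : ∀ t ∈ S, mdeg ℳ (zOf t) ≤ sdeg 𝒜 ℳ t - 1 := by
    intro t ht
    have ht' := Finset.mem_of_mem_filter t ht
    exact mdeg_z_lt (hdd t ht') (htker t (hfC t ht'))
      ((Finset.mem_filter.mp ht).2)
  set a' : M →₀ A := (a - c) + ∑ t ∈ S, Finsupp.single (zOf t) (g t) with ha'def
  refine ⟨a', ?_, ?_, ?_⟩
  · -- support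
    intro m hm
    rw [Finset.mem_coe, Finsupp.mem_support_iff] at hm
    by_contra hnot
    apply hm
    rw [Set.mem_union] at hnot
    push_neg at hnot
    obtain ⟨hmX, hmzel⟩ := hnot
    have ham : a m = 0 := by
      by_contra h
      exact hmX (hsupp (Finset.mem_coe.mpr (Finsupp.mem_support_iff.mpr h)))
    have hcm : c m = 0 := by
      rw [hc_apply, ham]
      simp
    rw [ha'def, Finsupp.add_apply, Finsupp.sub_apply, ham, hcm, sub_zero, zero_add,
      Finset.sum_apply']
    refine Finset.sum_eq_zero fun t ht => ?_
    exact Finsupp.single_eq_of_ne (fun h => hmzel (h ▸ hmz t ht))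
  · -- expression
    rw [sum_smul_eq_lc, ha'def, map_add, map_sub, map_sum]
    have hLc : Finsupp.linearCombination A (id : M → M) c
        = ∑ t ∈ S, g t • zOf t := by
      rw [← sum_smul_eq_lc, hzsum, hSdef]
      rw [Finset.sum_filter_of_ne]
      intro t ht h
      intro h0
      exact h (by rw [h0, smul_zero])
    rw [hLc]
    have : ∀ t ∈ S, Finsupp.linearCombination A (id : M → M) (Finsupp.single (zOf t) (g t))
        = g t • zOf t := by
      intro t ht
      rw [Finsupp.linearCombination_single]
      rfl
    rw [Finset.sum_congr rfl this]
    rw [← sum_smul_eq_lc, ← hexpr]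
    abel
  · -- degrees
    intro m hm
    rw [Finsupp.mem_support_iff] at hm
    have key : ∀ p : ℤ, D - mdeg ℳ m ≤ p → (DirectSum.decompose 𝒜 (a' m) p : A) = 0 := by
      intro p hp
      rw [ha'def, Finsupp.add_apply, Finsupp.sub_apply, coe_add, coe_sub, Finset.sum_apply',
        coe_sum]
      have h1 : (DirectSum.decompose 𝒜 (a m) p : A)
          - (DirectSum.decompose 𝒜 (c m) p : A) = 0 := by
        by_cases hmem : m ∈ a.support
        · rcases eq_or_ne p (D - mdeg ℳ m) with rfl | hpne
          · rw [DirectSum.decompose_of_mem_same 𝒜 (hcmem m), hc_apply, sub_self]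
          · have hma := hdef m hmem
            rw [decompose_eq_zero_of_lt (show mdeg 𝒜 (a m) < p by omega),
              DirectSum.decompose_of_mem_ne 𝒜 (hcmem m) (Ne.symm hpne), sub_zero]
        · rw [Finsupp.notMem_support_iff] at hmem
          have : c m = 0 := by rw [hc_apply, hmem]; simp
          rw [hmem, this]
          simp
      rw [h1, zero_add]
      refine Finset.sum_eq_zero fun t ht => ?_
      rcases eq_or_ne (zOf t) m with rfl | hne
      · rw [Finsupp.single_eq_same]
        refine DirectSum.decompose_of_mem_ne 𝒜 (hgmem t) ?_
        have := hz_deg t ht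
        omega
      · rw [Finsupp.single_eq_of_ne hne.symm]
        simp
    have : mdeg 𝒜 (a' m) ≤ D - 1 - mdeg ℳ m := by
      refine mdeg_le hm fun p hp => ?_
      by_contra h
      exact hp (key p (by omega))
    omega

end Aux

/-- If every element of `N` can be expressed in terms of the generators `X₀` with degree
defect at most `δ`, then Buchberger's algorithm terminates after at most `δ` steps,
producing a Gröbner basis of `N`. -/
theorem stmt_3 {A M : Type*} [CommRing A] (𝒜 : ℤ → AddSubgroup A) [GradedRing 𝒜]
    [AddCommGroup M] [Module A M] (ℳ : ℤ → AddSubgroup M) [DirectSum.Decomposition ℳ]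
    [SetLike.GradedSMul 𝒜 ℳ]
    (hA : RingNonnegGraded 𝒜) (hM : ModuleBddBelow ℳ)
    (N : Submodule A M) (X₀ : Set M) (hX₀ : X₀ ⊆ (N : Set M))
    (hgen : Submodule.span A X₀ = N) (δ : ℕ)
    (hδ : ∀ y ∈ N, ∃ a : M →₀ A, ↑a.support ⊆ X₀ ∧ y = a.sum (fun m c => c • m) ∧
      ∀ m ∈ a.support, mdeg 𝒜 (a m) + mdeg ℳ m ≤ mdeg ℳ y + δ)
    (X : ℕ → Set M) (hX0 : X 0 = X₀)
    (hstep : ∀ k, BuchbergerStep 𝒜 ℳ (X k) (X (k + 1))) :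
    ∃ k ≤ δ, IsGrobnerBasisSet ℳ N (X k) ∧
      ∀ C : Set (M →₀ A), IsHomogSyzygyGensSet 𝒜 ℳ (X k) C →
        ∀ z ∈ zElems C, HasReducedExprSet 𝒜 ℳ (X k) z := by
  classical
  have hXN : ∀ k, X k ⊆ (N : Set M) := by
    intro k
    induction k with
    | zero => rw [hX0]; exact hX₀
    | succ k ih =>
      obtain ⟨C, hC, hXk1⟩ := hstep k
      rw [hXk1]
      rintro m (hm | ⟨t, ht, rfl⟩)
      · exact ih hm
      · exact Submodule.sum_mem N fun m hm' => have hm := Finsupp.mem_support_iff.mp hm'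
          Submodule.smul_mem N _
            (ih (hC.1 t ht (Finset.mem_coe.mpr (Finsupp.mem_support_iff.mpr hm))))
  have key : ∀ k : ℕ, k ≤ δ → ∀ y ∈ N, ∃ a : M →₀ A, ↑a.support ⊆ X k ∧
      (y = a.sum fun m c => c • m) ∧
      ∀ m ∈ a.support, mdeg 𝒜 (a m) + mdeg ℳ m ≤ mdeg ℳ y + ((δ : ℤ) - k) := by
    intro k
    induction k with
    | zero =>
      intro _ y hy
      obtain ⟨a, h1, h2, h3⟩ := hδ y hy
      rw [hX0] at *
      exact ⟨a, h1, h2, fun m hm => by have := h3 m hm; push_cast; omega⟩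
    | succ k ih =>
      intro hk y hy
      obtain ⟨a, h1, h2, h3⟩ := ih (by omega) y hy
      obtain ⟨C, hC, hXk1⟩ := hstep k
      rcases eq_or_ne y 0 with rfl | hy0
      · exact ⟨0, by simp, by simp, by simp⟩
      have hD : mdeg ℳ y < mdeg ℳ y + ((δ : ℤ) - k) := by omega
      obtain ⟨a', ha1, ha2, ha3⟩ := Aux.reduction_step hC hD a h1 h2 (fun m hm => h3 m hm)
      refine ⟨a', by rw [hXk1]; exact ha1, ha2, fun m hm => ?_⟩
      have := ha3 m hm
      push_cast
      omega
  have hred : ∀ y ∈ N, ∃ a : M →₀ A, ↑a.support ⊆ X δ ∧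
      (y = a.sum fun m c => c • m) ∧
      ∀ m ∈ a.support, mdeg 𝒜 (a m) + mdeg ℳ m ≤ mdeg ℳ y := by
    intro y hy
    obtain ⟨a, h1, h2, h3⟩ := key δ le_rfl y hy
    exact ⟨a, h1, h2, fun m hm => by have := h3 m hm; omega⟩
  refine ⟨δ, le_rfl, ⟨hXN δ, ?_⟩, ?_⟩
  · apply le_antisymm
    · rw [Submodule.span_le]
      rintro _ ⟨m, hm, rfl⟩
      rcases eq_or_ne m 0 with rfl | hm0
      · rw [Aux.ini_zero]
        exact Submodule.zero_mem _
      · exact Submodule.subset_span ⟨m, hXN δ hm, hm0, rfl⟩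
    · rw [iniSub, Submodule.span_le]
      rintro _ ⟨x, hxN, hx0, rfl⟩
      obtain ⟨a, h1, h2, h3⟩ := hred x hxN
      have e1 : ini ℳ x = (DirectSum.decompose ℳ (a.sum fun m c => c • m) (mdeg ℳ x) : M) := by
        rw [ini, ← h2]
      rw [e1, Aux.top_component_expr a (mdeg ℳ x) (fun m hm _ => h3 m hm)]
      exact Submodule.sum_mem _ fun m hm => Submodule.smul_mem _ _
        (Submodule.subset_span ⟨m, h1 hm, rfl⟩)
  · rintro C hC z ⟨t, ht, rfl⟩
    have hzN : (t.sum fun m r => r • m) ∈ N := by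
      exact Submodule.sum_mem N fun m hm' => have hm := Finsupp.mem_support_iff.mp hm'
        Submodule.smul_mem N _
          (hXN δ (hC.1 t ht (Finset.mem_coe.mpr (Finsupp.mem_support_iff.mpr hm))))
    exact hred _ hzN
end

section
/- Every Gröbner-coherent graded module over a graded ring (supported in non-negative degrees) is coherent as an ungraded module. -/
open DirectSum

open scoped Classical

section Basic

variable {σ M : Type*} [AddCommMonoid M] [SetLike σ M] [AddSubmonoidClass σ M]
    (ℳ : ℤ → σ) [DirectSum.Decomposition ℳ]

lemma degset_finite (x : M) : {n : ℤ | (decompose ℳ x n : M) ≠ 0}.Finite := by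
  classical
  apply Set.Finite.subset (DFinsupp.support (decompose ℳ x)).finite_toSet
  intro n hn
  simp only [Set.mem_setOf_eq] at hn
  simp only [Finset.mem_coe, DFinsupp.mem_support_iff]
  intro h
  exact hn (by rw [h]; rfl)

lemma eq_zero_of_decompose_eq_zero {x : M} (h : ∀ n, (decompose ℳ x n : M) = 0) : x = 0 := by
  classical
  rw [← DirectSum.sum_support_decompose ℳ x]
  exact Finset.sum_eq_zero fun n _ => h n

lemma degset_nonempty {x : M} (hx : x ≠ 0) :
    {n : ℤ | (decompose ℳ x n : M) ≠ 0}.Nonempty := by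
  by_contra h
  rw [Set.not_nonempty_iff_eq_empty] at h
  exact hx (eq_zero_of_decompose_eq_zero ℳ fun n => by
    by_contra hn; exact (Set.eq_empty_iff_forall_notMem.mp h n) hn)

lemma decompose_mdeg_ne_zero {x : M} (hx : x ≠ 0) :
    (decompose ℳ x (mdeg ℳ x) : M) ≠ 0 :=
  Set.Nonempty.csSup_mem (degset_nonempty ℳ hx) (degset_finite ℳ x)

lemma ini_ne_zero_s5 {x : M} (hx : x ≠ 0) : ini ℳ x ≠ 0 := decompose_mdeg_ne_zero ℳ hx

lemma le_mdeg {x : M} {n : ℤ} (h : (decompose ℳ x n : M) ≠ 0) : n ≤ mdeg ℳ x :=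
  le_csSup ((degset_finite ℳ x).bddAbove) h

lemma decompose_eq_zero_of_mdeg_lt_s5 {x : M} {n : ℤ} (h : mdeg ℳ x < n) :
    (decompose ℳ x n : M) = 0 := by
  by_contra hc; exact absurd (le_mdeg ℳ hc) (not_le.mpr h)

lemma mdeg_of_mem_s5 {x : M} {n : ℤ} (hx : x ≠ 0) (hm : x ∈ ℳ n) : mdeg ℳ x = n := by
  have h1 : (decompose ℳ x n : M) = x := DirectSum.decompose_of_mem_same ℳ hm
  have h2 := decompose_mdeg_ne_zero ℳ hx
  by_contra hne
  exact h2 (DirectSum.decompose_of_mem_ne ℳ hm (Ne.symm hne))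

lemma ini_mem (x : M) : ini ℳ x ∈ ℳ (mdeg ℳ x) := SetLike.coe_mem _

lemma ini_zero : ini ℳ (0 : M) = 0 := by
  simp [ini]

end Basic

section Smul
variable {A : Type*} [CommRing A] (𝒜 : ℤ → AddSubgroup A) [GradedRing 𝒜]
variable {M : Type*} [AddCommGroup M] [Module A M] (ℳ : ℤ → AddSubgroup M)
  [DirectSum.Decomposition ℳ] [SetLike.GradedSMul 𝒜 ℳ]

lemma coe_decompose_sum {ι : Type*} (s : Finset ι) (v : ι → M) (n : ℤ) :
    (decompose ℳ (∑ i ∈ s, v i) n : M) = ∑ i ∈ s, (decompose ℳ (v i) n : M) := by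
  classical
  induction s using Finset.induction with
  | empty => simp
  | insert _ _ hni ih =>
      rw [Finset.sum_insert hni, Finset.sum_insert hni, DirectSum.decompose_add, ← ih]
      rfl

lemma decompose_smul_of_mem {a : A} {i : ℤ} (ha : a ∈ 𝒜 i) (m : M) (n : ℤ) :
    (decompose ℳ (a • m) n : M) = a • (decompose ℳ m (n - i) : M) := by
  induction m using DirectSum.Decomposition.inductionOn ℳ with
  | zero => simp
  | @homogeneous j m =>
      have hsm : a • (m : M) ∈ ℳ (i + j) := SetLike.GradedSMul.smul_mem ha m.2
      by_cases hn : n = i + j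
      · subst hn
        rw [DirectSum.decompose_of_mem_same ℳ hsm]
        rw [show i + j - i = j by ring, DirectSum.decompose_of_mem_same ℳ m.2]
      · rw [DirectSum.decompose_of_mem_ne ℳ hsm (fun h => hn h.symm)]
        rw [DirectSum.decompose_of_mem_ne ℳ m.2 (show j ≠ n - i by omega), smul_zero]
  | add m m' hm hm' =>
      rw [smul_add, DirectSum.decompose_add, DirectSum.add_apply, AddSubgroup.coe_add,
        hm, hm', DirectSum.decompose_add, DirectSum.add_apply, AddSubgroup.coe_add, smul_add]

lemma decompose_smul (a : A) (m : M) (n : ℤ) :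
    (decompose ℳ (a • m) n : M) =
      ∑ i ∈ (decompose 𝒜 a).support, (decompose 𝒜 a i : A) • (decompose ℳ m (n - i) : M) := by
  have h1 : a • m = ∑ i ∈ (decompose 𝒜 a).support, (decompose 𝒜 a i : A) • m := by
    rw [← Finset.sum_smul, DirectSum.sum_support_decompose]
  rw [h1, coe_decompose_sum ℳ]
  exact Finset.sum_congr rfl fun i _ =>
    decompose_smul_of_mem 𝒜 ℳ (SetLike.coe_mem _) m n

/-- For `m` homogeneous of degree `j`. -/
lemma decompose_smul_homog_right {m : M} {j : ℤ} (hm : m ∈ ℳ j) (a : A) (n : ℤ) :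
    (decompose ℳ (a • m) n : M) = (decompose 𝒜 a (n - j) : A) • m := by
  classical
  rw [decompose_smul 𝒜 ℳ]
  rw [Finset.sum_eq_single (n - j)]
  · have : n - (n - j) = j := by ring
    rw [this, DirectSum.decompose_of_mem_same ℳ hm]
  · intro b _ hb
    rw [DirectSum.decompose_of_mem_ne ℳ hm (show j ≠ n - b by omega), smul_zero]
  · intro hns
    rw [DFinsupp.notMem_support_iff.mp hns]
    simp

end Smul

section HomogSpan
variable {A : Type*} [CommRing A] (𝒜 : ℤ → AddSubgroup A) [GradedRing 𝒜]
variable {M : Type*} [AddCommGroup M] [Module A M] (ℳ : ℤ → AddSubgroup M)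
  [DirectSum.Decomposition ℳ] [SetLike.GradedSMul 𝒜 ℳ]

include 𝒜 in
lemma isHomog_span (S : Set M) (hS : ∀ m ∈ S, ∃ n, m ∈ ℳ n) :
    ∀ x ∈ Submodule.span A S, ∀ n : ℤ, (decompose ℳ x n : M) ∈ Submodule.span A S := by
  intro x hx
  induction hx using Submodule.span_induction with
  | mem m hm =>
      intro n
      obtain ⟨d, hd⟩ := hS m hm
      by_cases h : d = n
      · subst h; rw [DirectSum.decompose_of_mem_same ℳ hd]; exact Submodule.subset_span hm
      · rw [DirectSum.decompose_of_mem_ne ℳ hd h]; exact zero_mem _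
  | zero => intro n; rw [DirectSum.decompose_zero]; simpa using zero_mem _
  | add a b _ _ iha ihb =>
      intro n
      rw [DirectSum.decompose_add, DirectSum.add_apply, AddSubgroup.coe_add]
      exact add_mem (iha n) (ihb n)
  | smul a m _ ihm =>
      intro n
      rw [decompose_smul 𝒜 ℳ]
      exact Submodule.sum_mem _ fun i _ => Submodule.smul_mem _ _ (ihm _)

lemma division {n₀ : ℤ} (hM : ∀ n < n₀, ∀ m ∈ ℳ n, m = (0 : M))
    {N : Submodule A M} {nn : ℕ} {x : Fin nn → M} (hxN : ∀ i, x i ∈ N)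
    (hini : iniSub ℳ N ≤ Submodule.span A (Set.range fun i => ini ℳ (x i))) :
    ∀ y ∈ N, ∃ r : Fin nn → A, y = ∑ i, r i • x i ∧
      ∀ i p, (decompose 𝒜 (r i) p : A) ≠ 0 → p + mdeg ℳ (x i) ≤ mdeg ℳ y := by
  have mdeg_lb : ∀ z : M, z ≠ 0 → n₀ ≤ mdeg ℳ z := by
    intro z hz
    by_contra hlt
    exact decompose_mdeg_ne_zero ℳ hz (hM _ (not_le.mp hlt) _ (SetLike.coe_mem _))
  have main : ∀ k : ℕ, ∀ y ∈ N, y ≠ 0 → mdeg ℳ y ≤ n₀ + k →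
      ∃ r : Fin nn → A, y = ∑ i, r i • x i ∧
        ∀ i p, (decompose 𝒜 (r i) p : A) ≠ 0 → p + mdeg ℳ (x i) ≤ mdeg ℳ y := by
    intro k
    induction k using Nat.strong_induction_on with
    | _ k IH =>
      intro y hyN hy0 hdeg
      have hiy : ini ℳ y ∈ Submodule.span A (Set.range fun i => ini ℳ (x i)) :=
        hini (Submodule.subset_span ⟨y, hyN, hy0, rfl⟩)
      obtain ⟨a, ha⟩ := (Submodule.mem_span_range_iff_exists_fun A).mp hiy
      set d := mdeg ℳ y with hd
      set b : Fin nn → A := fun i => (decompose 𝒜 (a i) (d - mdeg ℳ (x i)) : A) with hb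
      have hbmem : ∀ i, b i ∈ 𝒜 (d - mdeg ℳ (x i)) := fun i => SetLike.coe_mem _
      have claim1 : ∑ i, b i • ini ℳ (x i) = ini ℳ y := by
        have h2 := congrArg (fun z => (decompose ℳ z d : M)) ha
        simp only at h2
        rw [coe_decompose_sum ℳ, DirectSum.decompose_of_mem_same ℳ (ini_mem ℳ y)] at h2
        rw [← h2]
        exact Finset.sum_congr rfl fun i _ => by
          rw [decompose_smul_homog_right 𝒜 ℳ (ini_mem ℳ (x i))]
      set y' : M := y - ∑ i, b i • x i with hy'
      have hy'N : y' ∈ N :=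
        sub_mem hyN (Submodule.sum_mem _ fun i _ => Submodule.smul_mem _ _ (hxN i))
      have claim2 : ∀ q, d ≤ q → (decompose ℳ y' q : M) = 0 := by
        intro q hq
        have hsub : (decompose ℳ y' q : M) =
            (decompose ℳ y q : M) - ∑ i, (decompose ℳ (b i • x i) q : M) := by
          rw [hy', DirectSum.decompose_sub, DirectSum.sub_apply, AddSubgroup.coe_sub,
            coe_decompose_sum ℳ]
        rcases eq_or_lt_of_le hq with heq | hlt
        · have : ∀ i, (decompose ℳ (b i • x i) q : M) = b i • ini ℳ (x i) := by
            intro i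
            rw [decompose_smul_of_mem 𝒜 ℳ (hbmem i),
              show q - (d - mdeg ℳ (x i)) = mdeg ℳ (x i) by omega]
            rfl
          rw [hsub, Finset.sum_congr rfl fun i _ => this i, claim1, ← heq]
          simp [ini]
          exact sub_self _
        · have h1 : (decompose ℳ y q : M) = 0 := decompose_eq_zero_of_mdeg_lt_s5 ℳ (by omega)
          have h2 : ∀ i, (decompose ℳ (b i • x i) q : M) = 0 := by
            intro i
            rw [decompose_smul_of_mem 𝒜 ℳ (hbmem i),
              decompose_eq_zero_of_mdeg_lt_s5 ℳ (by omega), smul_zero]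
          rw [hsub, h1, Finset.sum_congr rfl fun i _ => h2 i]
          simp
      have hbcomp : ∀ i p, (decompose 𝒜 (b i) p : A) ≠ 0 → p + mdeg ℳ (x i) ≤ d := by
        intro i p hp
        by_cases h : d - mdeg ℳ (x i) = p
        · omega
        · exact absurd (DirectSum.decompose_of_mem_ne 𝒜 (hbmem i) h) hp
      by_cases hy'0 : y' = 0
      · refine ⟨b, ?_, hbcomp⟩
        rw [hy', sub_eq_zero] at hy'0
        exact hy'0
      · have hlt : mdeg ℳ y' < d := by
          by_contra hge
          exact decompose_mdeg_ne_zero ℳ hy'0 (claim2 _ (not_lt.mp hge))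
        have hlb := mdeg_lb y' hy'0
        have hk' : (mdeg ℳ y' - n₀).toNat < k := by omega
        obtain ⟨r', hr'1, hr'2⟩ := IH _ hk' y' hy'N hy'0 (by omega)
        refine ⟨fun i => b i + r' i, ?_, ?_⟩
        · have h3 : y = y' + ∑ i, b i • x i := by rw [hy']; abel
          rw [h3, hr'1, ← Finset.sum_add_distrib]
          exact Finset.sum_congr rfl fun i _ => by rw [add_smul]; abel
        · intro i p hp
          have hsplit : (decompose 𝒜 (b i + r' i) p : A) =
              (decompose 𝒜 (b i) p : A) + (decompose 𝒜 (r' i) p : A) := by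
            rw [DirectSum.decompose_add, DirectSum.add_apply, AddSubgroup.coe_add]
          by_cases h1 : (decompose 𝒜 (b i) p : A) ≠ 0
          · exact hbcomp i p h1
          · have h2 : (decompose 𝒜 (r' i) p : A) ≠ 0 := by
              intro h2
              exact hp (by rw [hsplit, not_not.mp h1, h2, add_zero])
            have := hr'2 i p h2
            omega
  intro y hyN
  by_cases hy0 : y = 0
  · refine ⟨0, by simp [hy0], fun i p hp => absurd ?_ hp⟩
    simp [DirectSum.decompose_zero]
  · exact main (mdeg ℳ y - n₀).toNat y hyN hy0 (by have := mdeg_lb y hy0; omega)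

end HomogSpan


/-- A Gröbner-coherent graded module is coherent as an ungraded module. -/
theorem stmt_5 {A M : Type*} [CommRing A] (𝒜 : ℤ → AddSubgroup A) [GradedRing 𝒜]
    [AddCommGroup M] [Module A M] (ℳ : ℤ → AddSubgroup M) [DirectSum.Decomposition ℳ]
    [SetLike.GradedSMul 𝒜 ℳ]
    (hA : RingNonnegGraded 𝒜) (hM : ModuleBddBelow ℳ)
    (h : GrobnerCoherent (A := A) ℳ) :
    Module.Finite A M ∧
      ∀ N : Submodule A M, N.FG → Module.FinitePresentation A N := by
  classical
  obtain ⟨⟨hfin, hgc⟩, hgrob⟩ := h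
  refine ⟨hfin, ?_⟩
  intro N hN
  obtain ⟨n₀, hM0⟩ := hM
  have mdeg_lb : ∀ z : M, z ≠ 0 → n₀ ≤ mdeg ℳ z := by
    intro z hz
    by_contra hlt
    exact decompose_mdeg_ne_zero ℳ hz (hM0 _ (not_le.mp hlt) _ (SetLike.coe_mem _))
  have mdeg_nn : ∀ (a : A) (p : ℤ), p < 0 → (decompose 𝒜 a p : A) = 0 :=
    fun a p hp => hA p hp _ (SetLike.coe_mem _)
  obtain ⟨s0, hs0⟩ := hgrob N hN
  set s : Finset M := s0.erase 0 with hs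
  have hssub : (↑s : Set M) ⊆ (↑s0 : Set M) := Finset.coe_subset.mpr (Finset.erase_subset _ _)
  have hGB : IsGrobnerBasisSet ℳ N ↑s := by
    constructor
    · exact fun m hm => hs0.1 (hssub hm)
    · have himg : ini ℳ '' ↑s0 ⊆ insert 0 (ini ℳ '' ↑s) := by
        rintro _ ⟨z, hz, rfl⟩
        by_cases hz0 : z = 0
        · rw [hz0, ini_zero]
          exact Set.mem_insert _ _
        · exact Set.mem_insert_of_mem _
            ⟨z, by simp [hs, Finset.mem_erase, hz0, hz], rfl⟩
      have h1 : Submodule.span A (ini ℳ '' ↑s0) ≤ Submodule.span A (ini ℳ '' ↑s) :=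
        (Submodule.span_mono himg).trans_eq (Submodule.span_insert_zero)
      have h2 : Submodule.span A (ini ℳ '' ↑s) ≤ Submodule.span A (ini ℳ '' ↑s0) :=
        Submodule.span_mono (Set.image_mono hssub)
      rw [← hs0.2]
      exact le_antisymm h2 h1
  have hs0mem : (0 : M) ∉ (↑s : Set M) := by simp [hs]
  set nn := s.card with hnn
  set e := s.equivFin with he
  set x : Fin nn → M := fun i => ((e.symm i : s) : M) with hx
  have hrange : Set.range x = ↑s := by
    ext m
    constructor
    · rintro ⟨i, rfl⟩
      exact (e.symm i).2
    · intro hm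
      exact ⟨e ⟨m, hm⟩, by rw [hx]; simp⟩
  have hxN : ∀ i, x i ∈ N := fun i => hGB.1 (hrange ▸ Set.mem_range_self i)
  have hx0 : ∀ i, x i ≠ 0 := fun i hh => hs0mem (hh ▸ (hrange ▸ Set.mem_range_self i))
  have hL : Submodule.span A (Set.range fun i => ini ℳ (x i)) = iniSub ℳ N := by
    rw [← hGB.2]
    congr 1
    have hrc : (Set.range fun i => ini ℳ (x i)) = ini ℳ '' Set.range x := by
      rw [← Set.range_comp]
      rfl
    rw [hrc, hrange]
  have hLhom : IsHomogSubmodule ℳ (iniSub ℳ N) := by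
    intro z hz n
    rw [← hL] at hz ⊢
    refine isHomog_span 𝒜 ℳ _ ?_ z hz n
    rintro m ⟨i, rfl⟩
    exact ⟨mdeg ℳ (x i), ini_mem ℳ (x i)⟩
  have hLfg : (iniSub ℳ N).FG := by
    rw [← hL]
    exact Submodule.fg_span (Set.finite_range _)
  have hLfp : Module.FinitePresentation A (iniSub ℳ N) := hgc _ hLfg hLhom
  set f : (Fin nn → A) →ₗ[A] M := Fintype.linearCombination A x with hf
  set g : (Fin nn → A) →ₗ[A] M := Fintype.linearCombination A (fun i => ini ℳ (x i)) with hg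
  have hfapp : ∀ v : Fin nn → A, f v = ∑ i, v i • x i := fun v => rfl
  have hgapp : ∀ v : Fin nn → A, g v = ∑ i, v i • ini ℳ (x i) := fun v => rfl
  have hgrange : LinearMap.range g = iniSub ℳ N := by
    rw [hg, Fintype.range_linearCombination, ← hL]
  have hkerg : (LinearMap.ker g).FG := by
    haveI := hLfp
    let g' : (Fin nn → A) →ₗ[A] (iniSub ℳ N) :=
      g.codRestrict (iniSub ℳ N) (fun v => hgrange ▸ LinearMap.mem_range_self g v)
    have hg'surj : Function.Surjective g' := by
      rintro ⟨zz, hzz⟩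
      rw [← hgrange] at hzz
      obtain ⟨v, hv⟩ := hzz
      exact ⟨v, Subtype.ext hv⟩
    have := Module.FinitePresentation.fg_ker g' hg'surj
    rwa [LinearMap.ker_codRestrict] at this
  have hdiv := division 𝒜 ℳ hM0 hxN hL.ge
  -- syzygies of initial terms
  obtain ⟨t, w, hw⟩ := Submodule.fg_iff_exists_fin_generating_family.mp hkerg
  set comp : ℤ → (Fin nn → A) → (Fin nn → A) :=
    fun dd u i => (decompose 𝒜 (u i) (dd - mdeg ℳ (x i)) : A) with hcomp
  have hcompmem : ∀ dd u i, comp dd u i ∈ 𝒜 (dd - mdeg ℳ (x i)) :=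
    fun dd u i => SetLike.coe_mem _
  have hcomp_g : ∀ (dd : ℤ) (u : Fin nn → A), g (comp dd u) = (decompose ℳ (g u) dd : M) := by
    intro dd u
    rw [hgapp, hgapp, coe_decompose_sum ℳ]
    exact Finset.sum_congr rfl fun i _ => by
      rw [decompose_smul_homog_right 𝒜 ℳ (ini_mem ℳ (x i))]
  set E : (Fin nn → A) → Finset ℤ := fun u =>
    Finset.univ.biUnion (fun i => (decompose 𝒜 (u i)).support.image (· + mdeg ℳ (x i))) with hE
  have hcomp_sum : ∀ u : Fin nn → A, ∀ F : Finset ℤ, E u ⊆ F → u = ∑ dd ∈ F, comp dd u := by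
    intro u F hF
    funext i
    rw [Finset.sum_apply]
    have hsub : (decompose 𝒜 (u i)).support.image (· + mdeg ℳ (x i)) ⊆ F :=
      (Finset.subset_biUnion_of_mem _ (Finset.mem_univ i)).trans hF
    have h1 : ∀ dd ∈ F, dd ∉ (decompose 𝒜 (u i)).support.image (· + mdeg ℳ (x i)) →
        comp dd u i = 0 := by
      intro dd _ hdd
      have hz : (decompose 𝒜 (u i)) (dd - mdeg ℳ (x i)) = 0 := by
        by_contra hc
        exact hdd (Finset.mem_image.mpr
          ⟨dd - mdeg ℳ (x i), DFinsupp.mem_support_iff.mpr hc, by ring⟩)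
      rw [hcomp]
      simp only [hz, ZeroMemClass.coe_zero]
    have h2 : ∑ dd ∈ F, comp dd u i =
        ∑ dd ∈ (decompose 𝒜 (u i)).support.image (· + mdeg ℳ (x i)), comp dd u i :=
      (Finset.sum_subset hsub h1).symm
    rw [h2, Finset.sum_image (fun p _ q _ hpq => by omega)]
    have h3 : ∀ p, comp (p + mdeg ℳ (x i)) u i = (decompose 𝒜 (u i) p : A) := by
      intro p
      show (decompose 𝒜 (u i) (p + mdeg ℳ (x i) - mdeg ℳ (x i)) : A) = (decompose 𝒜 (u i) p : A)
      rw [show p + mdeg ℳ (x i) - mdeg ℳ (x i) = p from by ring]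
    rw [Finset.sum_congr rfl fun p _ => h3 p]
    exact (DirectSum.sum_support_decompose 𝒜 (u i)).symm
  set E' : Finset ℤ := Finset.univ.biUnion (fun l => E (w l)) with hE'
  set c : (Fin t × {dd // dd ∈ E'}) → (Fin nn → A) := fun j => comp j.2.1 (w j.1) with hc
  have hcmem : ∀ j i, c j i ∈ 𝒜 (j.2.1 - mdeg ℳ (x i)) := fun j i => hcompmem _ _ i
  have hwker : ∀ l, w l ∈ LinearMap.ker g :=
    fun l => hw ▸ Submodule.subset_span (Set.mem_range_self l)
  have hcomp_ker : ∀ dd u, u ∈ LinearMap.ker g → comp dd u ∈ LinearMap.ker g := by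
    intro dd u hu
    rw [LinearMap.mem_ker, hcomp_g, LinearMap.mem_ker.mp hu]
    simp [DirectSum.decompose_zero]
  have hspanc : Submodule.span A (Set.range c) = LinearMap.ker g := by
    apply le_antisymm
    · rw [Submodule.span_le]
      rintro _ ⟨j, rfl⟩
      exact hcomp_ker _ _ (hwker j.1)
    · rw [← hw, Submodule.span_le]
      rintro _ ⟨l, rfl⟩
      rw [hcomp_sum (w l) E' (Finset.subset_biUnion_of_mem (fun l => E (w l)) (Finset.mem_univ l))]
      exact Submodule.sum_mem _ fun dd hdd => Submodule.subset_span ⟨(l, ⟨dd, hdd⟩), rfl⟩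
  have hcker : ∀ j, c j ∈ LinearMap.ker g :=
    fun j => hspanc ▸ Submodule.subset_span ⟨j, rfl⟩
  -- the z-elements and their reduced expressions
  set z : (Fin t × {dd // dd ∈ E'}) → M := fun j => ∑ i, c j i • x i with hz
  have hzN : ∀ j, z j ∈ N :=
    fun j => Submodule.sum_mem _ fun i _ => Submodule.smul_mem _ _ (hxN i)
  have hz_deg : ∀ j q, j.2.1 ≤ q → (decompose ℳ (z j) q : M) = 0 := by
    intro j q hq
    rw [hz]
    rw [coe_decompose_sum ℳ]
    rcases eq_or_lt_of_le hq with heq | hlt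
    · have hterm : ∀ i, (decompose ℳ (c j i • x i) q : M) = c j i • ini ℳ (x i) := by
        intro i
        rw [decompose_smul_of_mem 𝒜 ℳ (hcmem j i),
          show q - (j.2.1 - mdeg ℳ (x i)) = mdeg ℳ (x i) by omega]
        rfl
      rw [Finset.sum_congr rfl fun i _ => hterm i, ← hgapp, LinearMap.mem_ker.mp (hcker j)]
    · have hterm : ∀ i, (decompose ℳ (c j i • x i) q : M) = 0 := by
        intro i
        rw [decompose_smul_of_mem 𝒜 ℳ (hcmem j i),
          decompose_eq_zero_of_mdeg_lt_s5 ℳ (show mdeg ℳ (x i) < q - (j.2.1 - mdeg ℳ (x i)) by omega),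
          smul_zero]
      rw [Finset.sum_congr rfl fun i _ => hterm i]
      simp
  have hzlt : ∀ j, z j ≠ 0 → mdeg ℳ (z j) < j.2.1 := by
    intro j hz0
    by_contra hge
    exact decompose_mdeg_ne_zero ℳ hz0 (hz_deg j _ (not_lt.mp hge))
  choose r hr1 hr2 using fun j => hdiv (z j) (hzN j)
  set r' : (Fin t × {dd // dd ∈ E'}) → Fin nn → A :=
    fun j => if z j = 0 then 0 else r j with hr'
  have hr1' : ∀ j, z j = ∑ i, r' j i • x i := by
    intro j
    rw [hr']
    by_cases h0 : z j = 0
    · simp [h0]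
    · simp only [h0, if_false]
      exact hr1 j
  have hr2' : ∀ j i p, (decompose 𝒜 (r' j i) p : A) ≠ 0 → p + mdeg ℳ (x i) < j.2.1 := by
    intro j i p hp
    rw [hr'] at hp
    by_cases h0 : z j = 0
    · simp only [h0, if_true] at hp
      exact absurd (by simp [DirectSum.decompose_zero]) hp
    · simp only [h0, if_false] at hp
      exact lt_of_le_of_lt (hr2 j i p hp) (hzlt j h0)
  set gens : (Fin t × {dd // dd ∈ E'}) → (Fin nn → A) := fun j => c j - r' j with hgens
  have hgens_ker : ∀ j, gens j ∈ LinearMap.ker f := by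
    intro j
    rw [hgens, LinearMap.mem_ker]
    simp only [map_sub]
    rw [hfapp, hfapp, ← hr1' j]
    exact sub_self (z j)
  -- the key induction: ker f is spanned by gens
  have key : ∀ k : ℕ, ∀ u ∈ LinearMap.ker f,
      (∀ i p, (decompose 𝒜 (u i) p : A) ≠ 0 → p + mdeg ℳ (x i) < n₀ + k) →
      u ∈ Submodule.span A (Set.range gens) := by
    intro k
    induction k with
    | zero =>
      intro u hu hcompu
      have hu0 : u = 0 := by
        funext i
        refine eq_zero_of_decompose_eq_zero 𝒜 fun p => ?_
        by_contra hcne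
        have h1 := hcompu i p hcne
        have h2 : 0 ≤ p := by
          by_contra hneg
          exact hcne (mdeg_nn _ p (by omega))
        have h3 := mdeg_lb (x i) (hx0 i)
        omega
      rw [hu0]
      exact zero_mem _
    | succ k IHk =>
      intro u hu hcompu
      set D : ℤ := n₀ + k with hD
      have hcompu' : ∀ i p, (decompose 𝒜 (u i) p : A) ≠ 0 → p + mdeg ℳ (x i) ≤ D := by
        intro i p hp
        have := hcompu i p hp
        omega
      set v : Fin nn → A := comp D u with hv
      have hvmem : ∀ i, v i ∈ 𝒜 (D - mdeg ℳ (x i)) := fun i => hcompmem D u i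
      have hterm : ∀ i, (decompose ℳ (u i • x i) D : M) = v i • ini ℳ (x i) := by
        intro i
        rw [decompose_smul 𝒜 ℳ]
        have hsingle := Finset.sum_eq_single (s := (decompose 𝒜 (u i)).support)
          (f := fun p => (decompose 𝒜 (u i) p : A) • (decompose ℳ (x i) (D - p) : M))
          (D - mdeg ℳ (x i))
          (fun b hb hbne => by
            show (decompose 𝒜 (u i) b : A) • (decompose ℳ (x i) (D - b) : M) = 0
            have hb' : (decompose 𝒜 (u i) b : A) ≠ 0 := by
              have hbb := DFinsupp.mem_support_iff.mp hb
              simpa using hbb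
            have hble := hcompu' i b hb'
            rw [decompose_eq_zero_of_mdeg_lt_s5 ℳ (show mdeg ℳ (x i) < D - b by omega), smul_zero])
          (fun hns => by
            show (decompose 𝒜 (u i) (D - mdeg ℳ (x i)) : A) •
              (decompose ℳ (x i) (D - (D - mdeg ℳ (x i))) : M) = 0
            have hzz : (decompose 𝒜 (u i)) (D - mdeg ℳ (x i)) = 0 :=
              DFinsupp.notMem_support_iff.mp hns
            rw [hzz]
            simp)
        rw [hsingle]
        show (decompose 𝒜 (u i) (D - mdeg ℳ (x i)) : A) •
          (decompose ℳ (x i) (D - (D - mdeg ℳ (x i))) : M) = v i • ini ℳ (x i)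
        rw [show D - (D - mdeg ℳ (x i)) = mdeg ℳ (x i) by ring]
        rfl
      have hvker : v ∈ LinearMap.ker g := by
        rw [LinearMap.mem_ker]
        have hgv : g v = (decompose ℳ (f u) D : M) := by
          rw [hgapp, hfapp, coe_decompose_sum ℳ]
          exact Finset.sum_congr rfl fun i _ => (hterm i).symm
        rw [hgv, LinearMap.mem_ker.mp hu]
        simp [DirectSum.decompose_zero]
      rw [← hspanc] at hvker
      obtain ⟨lam, hlam⟩ := (Submodule.mem_span_range_iff_exists_fun A).mp hvker
      set μ : (Fin t × {dd // dd ∈ E'}) → A :=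
        fun j => (decompose 𝒜 (lam j) (D - j.2.1) : A) with hμ
      have hμmem : ∀ j, μ j ∈ 𝒜 (D - j.2.1) := fun j => SetLike.coe_mem _
      have hveq : ∑ j, μ j • c j = v := by
        funext i
        rw [Finset.sum_apply]
        have h0 := congrArg
          (fun q : Fin nn → A => (decompose 𝒜 (q i) (D - mdeg ℳ (x i)) : A)) hlam
        simp only [Finset.sum_apply, Pi.smul_apply, smul_eq_mul] at h0
        rw [coe_decompose_sum (ℳ := 𝒜) Finset.univ (fun j => lam j * c j i)
          (D - mdeg ℳ (x i))] at h0
        rw [DirectSum.decompose_of_mem_same 𝒜 (hvmem i)] at h0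
        rw [← h0]
        refine Finset.sum_congr rfl fun j _ => ?_
        have h1 := decompose_smul_homog_right 𝒜 𝒜 (hcmem j i) (lam j) (D - mdeg ℳ (x i))
        rw [show D - mdeg ℳ (x i) - (j.2.1 - mdeg ℳ (x i)) = D - j.2.1 by ring] at h1
        simp only [smul_eq_mul] at h1
        rw [h1]
        rfl
      set u' : Fin nn → A := u - ∑ j, μ j • gens j with hu'
      have hu'ker : u' ∈ LinearMap.ker f :=
        sub_mem hu (Submodule.sum_mem _ fun j _ => Submodule.smul_mem _ _ (hgens_ker j))
      have hgenssum : ∑ j, μ j • gens j = v - ∑ j, μ j • r' j := by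
        rw [← hveq, ← Finset.sum_sub_distrib]
        exact Finset.sum_congr rfl fun j _ => by rw [hgens]; exact smul_sub _ _ _
      have hu'eq : u' = (u - v) + ∑ j, μ j • r' j := by
        rw [hu', hgenssum]
        abel
      have hu'comp : ∀ i p, (decompose 𝒜 (u' i) p : A) ≠ 0 → p + mdeg ℳ (x i) < n₀ + k := by
        intro i p hp
        by_contra hge
        apply hp
        have hD' : D ≤ p + mdeg ℳ (x i) := by omega
        have hui : u' i = (u i - v i) + ∑ j, μ j * r' j i := by
          rw [hu'eq]
          simp [Finset.sum_apply, Pi.smul_apply, smul_eq_mul, Pi.add_apply, Pi.sub_apply]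
        rw [hui, DirectSum.decompose_add, DirectSum.add_apply, AddSubgroup.coe_add,
          DirectSum.decompose_sub, DirectSum.sub_apply, AddSubgroup.coe_sub,
          coe_decompose_sum (ℳ := 𝒜)]
        have h1 : (decompose 𝒜 (u i) p : A) - (decompose 𝒜 (v i) p : A) = 0 := by
          by_cases hpd : p = D - mdeg ℳ (x i)
          · subst hpd
            rw [DirectSum.decompose_of_mem_same 𝒜 (hvmem i)]
            exact sub_self _
          · have h2 : (decompose 𝒜 (u i) p : A) = 0 := by
              by_contra hcc
              have := hcompu' i p hcc
              omega
            have h3 : (decompose 𝒜 (v i) p : A) = 0 :=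
              DirectSum.decompose_of_mem_ne 𝒜 (hvmem i) (fun hh => hpd hh.symm)
            rw [h2, h3, sub_zero]
        have h4 : ∀ j, (decompose 𝒜 (μ j * r' j i) p : A) = 0 := by
          intro j
          have h5 := DirectSum.coe_decompose_mul_add_of_left_mem 𝒜
            (i := D - j.2.1) (j := p - (D - j.2.1)) (hμmem j) (b := r' j i)
          rw [show D - j.2.1 + (p - (D - j.2.1)) = p by ring] at h5
          rw [h5]
          rcases eq_or_ne (decompose 𝒜 (r' j i) (p - (D - j.2.1)) : A) 0 with h6 | h6
          · rw [h6, mul_zero]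
          · have := hr2' j i _ h6
            omega
        rw [h1, Finset.sum_congr rfl fun j _ => h4 j, Finset.sum_const_zero, zero_add]
      have hmem := IHk u' hu'ker hu'comp
      have hufin : u = u' + ∑ j, μ j • gens j := by
        rw [hu']
        abel
      rw [hufin]
      exact add_mem hmem (Submodule.sum_mem _ fun j _ =>
        Submodule.smul_mem _ _ (Submodule.subset_span ⟨j, rfl⟩))
  have hkerf : LinearMap.ker f = Submodule.span A (Set.range gens) := by
    apply le_antisymm
    · intro u hu
      have hbnd : ∀ i, ∃ ki : ℕ, ∀ p, (decompose 𝒜 (u i) p : A) ≠ 0 →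
          p + mdeg ℳ (x i) < n₀ + ki := by
        intro i
        by_cases hui : u i = 0
        · refine ⟨0, fun p hp => absurd ?_ hp⟩
          rw [hui]
          simp [DirectSum.decompose_zero]
        · refine ⟨(mdeg 𝒜 (u i) + mdeg ℳ (x i) - n₀ + 1).toNat, fun p hp => ?_⟩
          have h1 : p ≤ mdeg 𝒜 (u i) := le_mdeg 𝒜 hp
          have h3 := mdeg_lb (x i) (hx0 i)
          omega
      choose ki hki using hbnd
      refine key (Finset.univ.sup ki) u hu fun i p hp => lt_of_lt_of_le (hki i p hp) ?_
      have h4 : ki i ≤ Finset.univ.sup ki := Finset.le_sup (Finset.mem_univ i)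
      omega
    · rw [Submodule.span_le]
      rintro _ ⟨j, rfl⟩
      exact hgens_ker j
  -- conclude: N is finitely presented
  have hfmemN : ∀ v, f v ∈ N := fun v => by
    rw [hfapp]
    exact Submodule.sum_mem _ fun i _ => Submodule.smul_mem _ _ (hxN i)
  have hf'surj : Function.Surjective (f.codRestrict N hfmemN) := by
    rintro ⟨y, hy⟩
    obtain ⟨rr, hrr, -⟩ := hdiv y hy
    refine ⟨rr, Subtype.ext ?_⟩
    show f rr = y
    rw [hfapp, ← hrr]
  refine Module.finitePresentation_of_surjective (f.codRestrict N hfmemN) hf'surj ?_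
  rw [LinearMap.ker_codRestrict, hkerf]
  exact Submodule.fg_span (Set.finite_range _)
end

section
/- Let M be a Gröbner-coherent graded R-module and M' ⊆ M a finitely generated homogeneous submodule. Then M' is Gröbner-coherent. -/
open DirectSum

section Aux

variable {A : Type*} [CommRing A]
variable {M : Type*} [AddCommGroup M] [Module A M] (ℳ : ℤ → AddSubgroup M)
  [DirectSum.Decomposition ℳ]
variable (M' : Submodule A M) (ℳ' : ℤ → AddSubgroup M') [DirectSum.Decomposition ℳ']
variable (hcompat : ∀ (n : ℤ) (y : M'), y ∈ ℳ' n ↔ (y : M) ∈ ℳ n)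

include hcompat in
lemma decompose_coe (y : M') (n : ℤ) :
    ((DirectSum.decompose ℳ' y n : M') : M) = (DirectSum.decompose ℳ (y : M) n : M) := by
  classical
  have hy : (y : M) = ∑ i ∈ (DirectSum.decompose ℳ' y).support,
      ((DirectSum.decompose ℳ' y i : M') : M) := by
    conv_lhs => rw [← DirectSum.sum_support_decompose ℳ' y]
    push_cast
    rfl
  rw [hy, DirectSum.decompose_sum]
  rw [DFinsupp.finset_sum_apply]
  push_cast
  rw [Finset.sum_eq_single n]
  · by_cases hn : n ∈ (DirectSum.decompose ℳ' y).support
    · rw [DirectSum.decompose_of_mem_same ℳ ((hcompat n _).mp (DirectSum.decompose ℳ' y n).2)]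
    · simp only [DFinsupp.mem_support_toFun, not_not] at hn
      rw [hn]
      simp
  · intro i _ hi
    rw [DirectSum.decompose_of_mem_ne ℳ ((hcompat i _).mp (DirectSum.decompose ℳ' y i).2) hi]
  · intro hn
    simp only [DFinsupp.mem_support_toFun, not_not] at hn
    rw [hn]
    simp

include hcompat in
lemma mdeg_coe (y : M') : mdeg ℳ' y = mdeg ℳ (y : M) := by
  unfold mdeg
  congr 1
  ext n
  have key := decompose_coe ℳ M' ℳ' hcompat y n
  simp only [Set.mem_setOf_eq, ne_eq]
  constructor <;> intro hne h0 <;> apply hne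
  · have h2 : ((DirectSum.decompose ℳ' y n : M') : M) = 0 := by
      rw [key, h0]
    exact_mod_cast h2
  · have h2 : ((DirectSum.decompose ℳ (y : M) n : M)) = 0 := by
      rw [← key, h0]
      simp
    exact_mod_cast h2

include hcompat in
lemma ini_coe (y : M') : ((ini ℳ' y : M') : M) = ini ℳ (y : M) := by
  unfold ini
  rw [mdeg_coe ℳ M' ℳ' hcompat y, decompose_coe ℳ M' ℳ' hcompat]

include hcompat in
lemma iniSub_map (N : Submodule A M') :
    (iniSub ℳ' N).map M'.subtype = iniSub ℳ (N.map M'.subtype) := by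
  unfold iniSub
  rw [Submodule.map_span]
  congr 1
  ext m
  constructor
  · rintro ⟨m', ⟨x, hxN, hx0, rfl⟩, rfl⟩
    refine ⟨(x : M), ⟨x, hxN, rfl⟩, ?_, (ini_coe ℳ M' ℳ' hcompat x).symm⟩
    simpa using hx0
  · rintro ⟨x', ⟨x, hxN, rfl⟩, hx0, rfl⟩
    exact ⟨ini ℳ' x, ⟨x, hxN, by simpa using hx0, rfl⟩, ini_coe ℳ M' ℳ' hcompat x⟩

end Aux

/-- A finitely generated homogeneous submodule of a Gröbner-coherent module is
Gröbner-coherent (with its induced grading). -/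
theorem stmt_6 {A M : Type*} [CommRing A] (𝒜 : ℤ → AddSubgroup A) [GradedRing 𝒜]
    [AddCommGroup M] [Module A M] (ℳ : ℤ → AddSubgroup M) [DirectSum.Decomposition ℳ]
    [SetLike.GradedSMul 𝒜 ℳ]
    (hA : RingNonnegGraded 𝒜) (hM : ModuleBddBelow ℳ)
    (h : GrobnerCoherent (A := A) ℳ)
    (M' : Submodule A M) (hfg : M'.FG) (hhom : IsHomogSubmodule ℳ M')
    (ℳ' : ℤ → AddSubgroup M') [DirectSum.Decomposition ℳ']
    (hcompat : ∀ (n : ℤ) (y : M'), y ∈ ℳ' n ↔ (y : M) ∈ ℳ n) :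
    GrobnerCoherent (A := A) ℳ' := by
  classical
  have map_mem : ∀ {N : Submodule A ↥M'} {x : M}, x ∈ N.map M'.subtype → x ∈ M' := by
    rintro N x ⟨y, _, rfl⟩; exact y.2
  constructor
  · constructor
    · exact Module.Finite.iff_fg.mpr hfg
    · intro N hNfg hNhom
      have hN'fg : (N.map M'.subtype).FG := hNfg.map _
      have hN'hom : IsHomogSubmodule ℳ (N.map M'.subtype) := by
        rintro x ⟨y, hyN, rfl⟩ n
        rw [show (M'.subtype y : M) = (y : M) from rfl,
          ← decompose_coe ℳ M' ℳ' hcompat y n]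
        exact ⟨_, hNhom y hyN n, rfl⟩
      have hFP := h.1.2 (N.map M'.subtype) hN'fg hN'hom
      let e : N ≃ₗ[A] N.map M'.subtype :=
        Submodule.equivMapOfInjective M'.subtype M'.injective_subtype N
      exact Module.finitePresentation_of_surjective e.symm.toLinearMap e.symm.surjective
        (by rw [LinearEquiv.ker]; exact Submodule.fg_bot)
  · intro N hNfg
    obtain ⟨s, hs1, hs2⟩ := h.2 (N.map M'.subtype) (hNfg.map _)
    set s' : Finset ↥M' := s.attach.image (fun x => (⟨x.1, map_mem (hs1 x.2)⟩ : ↥M'))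
      with hs'
    have hset : (fun y : ↥M' => (y : M)) '' ↑s' = ↑s := by
      rw [hs', Finset.coe_image, ← Set.image_comp]
      ext m
      constructor
      · rintro ⟨x, _, rfl⟩; exact x.2
      · intro hm; exact ⟨⟨m, hm⟩, Finset.mem_attach _ _, rfl⟩
    refine ⟨s', ?_, ?_⟩
    · intro y hy
      have hys : (y : M) ∈ (↑s : Set M) := hset ▸ ⟨y, hy, rfl⟩
      have : (y : M) ∈ N.map M'.subtype := hs1 hys
      obtain ⟨z, hz, hzy⟩ := this
      rwa [show z = y from Subtype.ext hzy] at hz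
    · apply Submodule.map_injective_of_injective M'.injective_subtype
      rw [Submodule.map_span, iniSub_map ℳ M' ℳ' hcompat N, ← hs2]
      congr 1
      calc (⇑M'.subtype) '' (ini ℳ' '' ↑s')
          = (fun y : ↥M' => ini ℳ (y : M)) '' ↑s' := by
            rw [← Set.image_comp]
            exact Set.image_congr fun y _ => ini_coe ℳ M' ℳ' hcompat y
        _ = ini ℳ '' ((fun y : ↥M' => (y : M)) '' ↑s') := by rw [← Set.image_comp]; rfl
        _ = ini ℳ '' ↑s := by rw [hset]
end

section
/- Let k be a valuation ring whose value group is non-archimedean, i.e., there exist nonzero a, b ∈ k with v(a) > 0 and v(b) > n·v(a) for all natural numbers n. Let I = (ax + 1, b) ⊆ k[x], with k[x] graded by degree in x. Then the initial ideal in(I) is not finitely generated; in particular k[x] is not Gröbner-coherent. -/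
open DirectSum

section Aux
open Polynomial

variable {k : Type*} [CommRing k]

lemma ini_def (𝒜 : ℤ → AddSubgroup (Polynomial k)) [GradedRing 𝒜] (x : Polynomial k) :
    ini 𝒜 x = (DirectSum.decompose 𝒜 x (mdeg 𝒜 x) : Polynomial k) := rfl

lemma supp_finite (𝒜 : ℤ → AddSubgroup (Polynomial k)) [GradedRing 𝒜] (x : Polynomial k) :
    {n : ℤ | (DirectSum.decompose 𝒜 x n : Polynomial k) ≠ 0}.Finite := by
  classical
  apply Set.Finite.subset (DFinsupp.support (DirectSum.decompose 𝒜 x)).finite_toSet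
  intro n hn
  simp only [Finset.coe_sort_coe, Finset.mem_coe, DFinsupp.mem_support_iff]
  exact fun h => hn (by simp [h])

lemma supp_nonempty (𝒜 : ℤ → AddSubgroup (Polynomial k)) [GradedRing 𝒜] {x : Polynomial k}
    (hx : x ≠ 0) :
    {n : ℤ | (DirectSum.decompose 𝒜 x n : Polynomial k) ≠ 0}.Nonempty := by
  classical
  by_contra h
  rw [Set.not_nonempty_iff_eq_empty] at h
  apply hx
  have := DirectSum.sum_support_decompose 𝒜 x
  rw [← this]
  apply Finset.sum_eq_zero
  intro n hn
  by_contra hne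
  exact (Set.eq_empty_iff_forall_notMem.mp h n) hne

lemma ini_constant (𝒜 : ℤ → AddSubgroup (Polynomial k)) [GradedRing 𝒜]
    (hcomp : ∀ (n : ℤ) (p : Polynomial k),
      p ∈ 𝒜 n ↔ ((0 ≤ n ∧ ∃ c : k, p = Polynomial.C c * Polynomial.X ^ n.toNat) ∨ p = 0))
    {x : Polynomial k} (hx : x ≠ 0)
    (h0 : Polynomial.constantCoeff (ini 𝒜 x) ≠ 0) :
    x = Polynomial.C (Polynomial.constantCoeff (ini 𝒜 x)) := by
  classical
  set S := {n : ℤ | (DirectSum.decompose 𝒜 x n : Polynomial k) ≠ 0} with hS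
  have hfin : S.Finite := supp_finite 𝒜 x
  have hne : S.Nonempty := supp_nonempty 𝒜 hx
  have hini_ne : ini 𝒜 x ≠ 0 := fun h => h0 (by simp [h])
  have hmem : ini 𝒜 x ∈ 𝒜 (mdeg 𝒜 x) := SetLike.coe_mem _
  rw [hcomp] at hmem
  rcases hmem with ⟨hm0, c, hc⟩ | h
  · have ht : (mdeg 𝒜 x).toNat = 0 := by
      by_contra ht
      apply h0
      simp [hc, Polynomial.constantCoeff_apply, Polynomial.coeff_X_pow, Ne.symm ht]
    have hm : mdeg 𝒜 x = 0 := le_antisymm (Int.toNat_eq_zero.mp ht) hm0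
    have hsub : S ⊆ {0} := by
      intro n hn
      have h1 : n ≤ 0 := by
        have := le_csSup hfin.bddAbove hn
        rwa [show sSup S = mdeg 𝒜 x from rfl, hm] at this
      have h2 : 0 ≤ n := by
        have hmn : (DirectSum.decompose 𝒜 x n : Polynomial k) ∈ 𝒜 n := SetLike.coe_mem _
        rw [hcomp] at hmn
        rcases hmn with ⟨h3, _⟩ | h3
        · exact h3
        · exact absurd h3 hn
      exact Set.mem_singleton_iff.mpr (le_antisymm h1 h2)
    have hx0 : x = (DirectSum.decompose 𝒜 x 0 : Polynomial k) := by
      have hsum := DirectSum.sum_support_decompose 𝒜 x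
      have hsubF : DFinsupp.support (DirectSum.decompose 𝒜 x) ⊆ {0} := by
        intro n hn
        rw [DFinsupp.mem_support_iff] at hn
        have : n ∈ S := fun h => hn (by simpa [ZeroMemClass.coe_eq_zero] using h)
        simpa using hsub this
      rw [← hsum]
      rw [Finset.sum_subset hsubF]
      · simp
      · intro n _ hn
        rw [DFinsupp.mem_support_iff, not_not] at hn
        simp [hn]
    have hini : ini 𝒜 x = (DirectSum.decompose 𝒜 x 0 : Polynomial k) := by
      rw [ini_def, hm]
    have hinic : ini 𝒜 x = Polynomial.C c := by rw [hc, ht]; simp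
    have hcc : Polynomial.constantCoeff (ini 𝒜 x) = c := by rw [hinic]; simp
    rw [hcc, hx0, ← hini, hinic]
  · exact absurd h hini_ne

variable {k : Type*} [CommRing k]

lemma exists_aeval_mul_pow {K : Type*} [CommRing K] [Algebra k K] (a : k) (t : K)
    (h : t * algebraMap k K a = -1) (q : Polynomial k) :
    ∃ (e : k) (N : ℕ), Polynomial.aeval t q * (algebraMap k K a) ^ N = algebraMap k K e := by
  induction q using Polynomial.induction_on' with
  | add p q hp hq =>
    obtain ⟨e1, N1, h1⟩ := hp
    obtain ⟨e2, N2, h2⟩ := hq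
    refine ⟨e1 * a ^ N2 + e2 * a ^ N1, N1 + N2, ?_⟩
    simp only [map_add, map_mul, map_pow, pow_add]
    linear_combination (algebraMap k K a ^ N2) * h1 + (algebraMap k K a ^ N1) * h2
  | monomial n r =>
    refine ⟨(-1) ^ n * r, n, ?_⟩
    rw [Polynomial.aeval_monomial, mul_assoc, ← mul_pow, h]
    simp only [map_mul, map_pow, map_neg, map_one]
    ring

lemma const_mem_span_aux {k : Type*} [CommRing k] [IsDomain k] (a b c : k) (ha : a ≠ 0)
    (h : Polynomial.C c ∈ Ideal.span {Polynomial.C a * Polynomial.X + 1, Polynomial.C b}) :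
    ∃ (e : k) (N : ℕ), a ^ N * c = e * b := by
  obtain ⟨p, q, hpq⟩ := Ideal.mem_span_pair.mp h
  let K := FractionRing k
  let φ := algebraMap k K
  have hφ : Function.Injective φ := IsFractionRing.injective k K
  have haK : φ a ≠ 0 := fun h0 => ha (hφ (by simpa using h0))
  set t : K := -(φ a)⁻¹ with ht_def
  have ht : t * φ a = -1 := by
    rw [ht_def]
    rw [neg_mul, inv_mul_cancel₀ haK]
  have heval := congrArg (Polynomial.aeval t) hpq
  simp only [map_add, map_mul, map_one, Polynomial.aeval_C, Polynomial.aeval_X] at heval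
  have hz : φ a * t + 1 = 0 := by rw [mul_comm, ht]; ring
  rw [hz, mul_zero, zero_add] at heval
  obtain ⟨e, N, he⟩ := exists_aeval_mul_pow a t ht q
  refine ⟨e, N, hφ ?_⟩
  simp only [map_mul, map_pow, φ]
  calc (algebraMap k K a) ^ N * algebraMap k K c
      = Polynomial.aeval t q * (algebraMap k K a) ^ N * algebraMap k K b := by
        rw [← heval]; ring
    _ = algebraMap k K e * algebraMap k K b := by rw [he]

lemma ini_C (𝒜 : ℤ → AddSubgroup (Polynomial k)) [GradedRing 𝒜]
    (hcomp : ∀ (n : ℤ) (p : Polynomial k),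
      p ∈ 𝒜 n ↔ ((0 ≤ n ∧ ∃ c : k, p = Polynomial.C c * Polynomial.X ^ n.toNat) ∨ p = 0))
    {c : k} (hc : c ≠ 0) : ini 𝒜 (Polynomial.C c) = Polynomial.C c := by
  classical
  have hmem : (Polynomial.C c : Polynomial k) ∈ 𝒜 0 := by
    rw [hcomp]; exact Or.inl ⟨le_refl 0, c, by simp⟩
  have hSeq : {n : ℤ | (DirectSum.decompose 𝒜 (Polynomial.C c) n : Polynomial k) ≠ 0} = {0} := by
    ext n
    simp only [Set.mem_setOf_eq, Set.mem_singleton_iff]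
    constructor
    · intro hn
      by_contra h0
      exact hn (DirectSum.decompose_of_mem_ne 𝒜 hmem (fun h => h0 h.symm))
    · intro hn; subst hn
      rw [DirectSum.decompose_of_mem_same 𝒜 hmem]
      simpa using hc
  have hm : mdeg 𝒜 (Polynomial.C c) = 0 := by
    unfold mdeg
    rw [hSeq]
    exact csSup_singleton 0
  rw [ini_def, hm, DirectSum.decompose_of_mem_same 𝒜 hmem]

end Aux

/-- Over a valuation ring `k` with non-archimedean value group (there are `a, b ≠ 0` with
`v(a) > 0` and `v(b) > n·v(a)` for all `n`), the initial ideal of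
`I = (a·x + 1, b) ⊆ k[x]` is not finitely generated; in particular `k[x]` is not
Gröbner-coherent. -/
theorem stmt_16 (k : Type*) [CommRing k] [IsDomain k] [ValuationRing k]
    (a b : k) (ha : a ≠ 0) (hb : b ≠ 0) (hau : ¬IsUnit a)
    (hval : ∀ n : ℕ, ∃ c : k, ¬IsUnit c ∧ b = a ^ n * c)
    (𝒜 : ℤ → AddSubgroup (Polynomial k)) [GradedRing 𝒜]
    (hcomp : ∀ (n : ℤ) (p : Polynomial k),
      p ∈ 𝒜 n ↔ ((0 ≤ n ∧ ∃ c : k, p = Polynomial.C c * Polynomial.X ^ n.toNat) ∨ p = 0))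
    (I : Ideal (Polynomial k))
    (hI : I = Ideal.span {Polynomial.C a * Polynomial.X + 1, Polynomial.C b}) :
    ¬(iniSub 𝒜 I).FG ∧ ¬GrobnerCoherent (A := Polynomial k) 𝒜 := by
  classical
  have key : ¬(iniSub 𝒜 I).FG := by
    intro hFG
    have hcspec : ∀ n : ℕ, ¬IsUnit ((hval n).choose) ∧ b = a ^ n * (hval n).choose :=
      fun n => (hval n).choose_spec
    set cs : ℕ → k := fun n => (hval n).choose with hcs
    have hb_eq : ∀ n, b = a ^ n * cs n := fun n => (hcspec n).2
    have hcne : ∀ n, cs n ≠ 0 := by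
      intro n h
      apply hb
      rw [hb_eq n, h, mul_zero]
    have hmono : ∀ N M : ℕ, N ≤ M → cs N = a ^ (M - N) * cs M := by
      intro N M hNM
      have h1 : a ^ N * cs N = a ^ N * (a ^ (M - N) * cs M) := by
        rw [← hb_eq N, ← mul_assoc, ← pow_add, Nat.add_sub_cancel' hNM, ← hb_eq M]
      exact mul_left_cancel₀ (pow_ne_zero N ha) h1
    have hstep : ∀ n : ℕ, cs n = a * cs (n + 1) := by
      intro n
      have := hmono n (n + 1) (Nat.le_succ n)
      simpa using this
    have hfI : Polynomial.C a * Polynomial.X + 1 ∈ I := by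
      rw [hI]; exact Ideal.subset_span (by simp)
    have hCmem : ∀ n : ℕ, Polynomial.C (cs n) ∈ I := by
      intro n
      induction n with
      | zero =>
        have h0 : cs 0 = b := by
          have := (hb_eq 0).symm
          simpa using this
        rw [h0, hI]
        exact Ideal.subset_span (by simp)
      | succ n ih =>
        have hid : Polynomial.C (cs (n + 1)) =
            Polynomial.C (cs (n + 1)) * (Polynomial.C a * Polynomial.X + 1)
              - Polynomial.X * Polynomial.C (cs n) := by
          rw [hstep n, map_mul]
          ring
        rw [hid]
        exact I.sub_mem (I.mul_mem_left _ hfI) (I.mul_mem_left _ ih)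
    have hiniSub : ∀ n : ℕ, Polynomial.C (cs n) ∈ iniSub 𝒜 I := by
      intro n
      apply Submodule.subset_span
      exact ⟨Polynomial.C (cs n), hCmem n, by simpa using hcne n, ini_C 𝒜 hcomp (hcne n)⟩
    set J0 : Ideal k := Ideal.map (Polynomial.constantCoeff) (iniSub 𝒜 I) with hJ0
    have hJ0FG : J0.FG := Ideal.FG.map hFG Polynomial.constantCoeff
    have hcsJ0 : ∀ n, cs n ∈ J0 := by
      intro n
      have := Ideal.mem_map_of_mem (Polynomial.constantCoeff) (hiniSub n)
      simpa using this
    have hJ0le : J0 ≤ Ideal.comap (Polynomial.C : k →+* Polynomial k) I := by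
      rw [hJ0, Ideal.map_le_iff_le_comap]
      unfold iniSub
      rw [Submodule.span_le]
      rintro m ⟨x, hxI, hx0, rfl⟩
      simp only [SetLike.mem_coe, Ideal.mem_comap]
      by_cases hc0 : Polynomial.constantCoeff (ini 𝒜 x) = 0
      · rw [hc0]
        simp
      · have hx := ini_constant 𝒜 hcomp hx0 hc0
        rw [← hx]
        exact hxI
    have hdiv : ∀ t : k, t ∈ J0 → ∃ N0 : ℕ, ∀ M, N0 ≤ M → t ∈ Ideal.span {cs M} := by
      intro t ht
      have hCt := Ideal.mem_comap.mp (hJ0le ht)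
      rw [hI] at hCt
      obtain ⟨e, N, he⟩ := const_mem_span_aux a b t ha hCt
      have ht' : t = e * cs N := by
        apply mul_left_cancel₀ (pow_ne_zero N ha)
        rw [he, hb_eq N]; ring
      refine ⟨N, fun M hM => ?_⟩
      rw [Ideal.mem_span_singleton]
      exact ⟨e * a ^ (M - N), by rw [ht', hmono N M hM]; ring⟩
    obtain ⟨T, hT⟩ := hJ0FG
    have hch : ∀ t : k, ∃ N0 : ℕ, t ∈ J0 → ∀ M, N0 ≤ M → t ∈ Ideal.span {cs M} := by
      intro t
      by_cases ht : t ∈ J0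
      · obtain ⟨N0, h⟩ := hdiv t ht
        exact ⟨N0, fun _ => h⟩
      · exact ⟨0, fun h => absurd h ht⟩
    choose Nf hNf using hch
    set M := T.sup Nf with hMdef
    have hJ0le' : J0 ≤ Ideal.span {cs M} := by
      rw [← hT]
      apply Ideal.span_le.mpr
      intro t ht
      have htJ0 : t ∈ J0 := by
        rw [← hT]
        exact Ideal.subset_span ht
      exact hNf t htJ0 M (Finset.le_sup ht)
    have hmem' : cs (M + 1) ∈ Ideal.span {cs M} := hJ0le' (hcsJ0 (M + 1))
    rw [Ideal.mem_span_singleton] at hmem'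
    obtain ⟨d, hd⟩ := hmem'
    apply hau
    have h1 : cs (M + 1) * 1 = cs (M + 1) * (a * d) := by
      rw [mul_one]
      calc cs (M + 1) = cs M * d := hd
        _ = (a * cs (M + 1)) * d := by rw [← hstep M]
        _ = cs (M + 1) * (a * d) := by ring
    have h2 : (1 : k) = a * d := mul_left_cancel₀ (hcne (M + 1)) h1
    exact IsUnit.of_mul_eq_one d h2.symm
  refine ⟨key, ?_⟩
  rintro ⟨-, hGC⟩
  have hIFG : I.FG := by
    rw [hI]
    exact Submodule.fg_span (Set.toFinite _)
  obtain ⟨s, hs⟩ := hGC I hIFG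
  apply key
  exact Submodule.fg_def.mpr ⟨ini 𝒜 '' ↑s, (s.finite_toSet).image _, hs.2⟩
end
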